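/- arXiv:2404.15755 — 2 statements merged into one kernel-verified Lean document; each statement's English description precedes it below -/
import Mathlib

section
/- Let (X,d,m) be an mm-space with supp m = X satisfying CD(K,N) for some K > 0 and N ∈ (1,∞). Then X is compact and diam(X) ≤ π·√((N−1)/K). -/
open MeasureTheory Filter Set Topology ENNReal
open scoped Classical

noncomputable section

/-- A coupling of two measures. -/
def IsCoupling {α β : Type*} [MeasurableSpace α] [MeasurableSpace β]
    (q : Measure (α × β)) (μ : Measure α) (ν : Measure β) : Prop :=
  Measure.map Prod.fst q = μ ∧ Measure.map Prod.snd q = ν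

/-- Membership in the Wasserstein space `P₂`. -/
def MemP2 {α : Type*} [MetricSpace α] [MeasurableSpace α] (μ : Measure α) : Prop :=
  IsProbabilityMeasure μ ∧ ∃ x₀ : α, ∫⁻ x, edist x x₀ ^ 2 ∂μ < ∞

/-- The squared Kantorovich–Wasserstein distance. -/
def Wsq {α : Type*} [MetricSpace α] [MeasurableSpace α] (μ ν : Measure α) : ℝ≥0∞ :=
  ⨅ (q : Measure (α × α)) (_ : IsCoupling q μ ν), ∫⁻ p, edist p.1 p.2 ^ 2 ∂q

/-- The Kantorovich–Wasserstein distance `W₂`. -/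
def W2 {α : Type*} [MetricSpace α] [MeasurableSpace α] (μ ν : Measure α) : ℝ≥0∞ :=
  Wsq μ ν ^ (1/2 : ℝ)

/-- A `W₂`-geodesic parametrized by `[0,1]`. -/
def IsW2Geodesic {α : Type*} [MetricSpace α] [MeasurableSpace α] (μ : ℝ → Measure α) : Prop :=
  ∀ s ∈ Icc (0:ℝ) 1, ∀ t ∈ Icc (0:ℝ) 1,
    W2 (μ s) (μ t) = ENNReal.ofReal |s - t| * W2 (μ 0) (μ 1)

/-- Integrand of the Boltzmann entropy. -/
def entFun {α : Type*} [MeasurableSpace α] (μ m : Measure α) (x : α) : ℝ :=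
  (μ.rnDeriv m x).toReal * Real.log (μ.rnDeriv m x).toReal

/-- Boltzmann entropy `Ent(μ|m)`. -/
def Ent {α : Type*} [MeasurableSpace α] (μ m : Measure α) : EReal :=
  if μ ≪ m ∧ Integrable (fun x => max (entFun μ m x) 0) m then
    ((∫ x, max (entFun μ m x) 0 ∂m : ℝ) : EReal)
      - ((∫⁻ x, ENNReal.ofReal (-(entFun μ m x)) ∂m : ℝ≥0∞) : EReal)
  else ⊤

/-- The CD(K,∞) convexity inequality along some geodesic from `μ₀` to `μ₁`. -/
def CDinftyFor {α : Type*} [MetricSpace α] [MeasurableSpace α]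
    (K : ℝ) (m μ₀ μ₁ : Measure α) : Prop :=
  ∃ μ : ℝ → Measure α, μ 0 = μ₀ ∧ μ 1 = μ₁ ∧ IsW2Geodesic μ ∧
    ∀ t ∈ Icc (0:ℝ) 1,
      Ent (μ t) m ≤ ((1 - t : ℝ) : EReal) * Ent μ₀ m + ((t : ℝ) : EReal) * Ent μ₁ m
        - ((K/2 * (t * (1-t)) : ℝ) : EReal) * ((Wsq μ₀ μ₁ : ℝ≥0∞) : EReal)

/-- The curvature-dimension condition CD(K,∞). -/
def CDinfty {α : Type*} [MetricSpace α] [MeasurableSpace α] (K : ℝ) (m : Measure α) : Prop :=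
  ∀ μ₀ μ₁ : Measure α, MemP2 μ₀ → MemP2 μ₁ → CDinftyFor K m μ₀ μ₁

/-- Distortion coefficients `τ^{(t)}_{K,N}(θ)`. -/
def tauCoef (K N t θ : ℝ) : ℝ≥0∞ :=
  if 0 < K then
    if Real.pi * Real.sqrt ((N-1)/K) ≤ θ then ∞
    else ENNReal.ofReal (t ^ (1/N) *
      (Real.sin (Real.sqrt (K/(N-1)) * (t * θ)) / Real.sin (Real.sqrt (K/(N-1)) * θ)) ^ ((N-1)/N))
  else if K = 0 then ENNReal.ofReal t
  else ENNReal.ofReal (t ^ (1/N) *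
      (Real.sinh (Real.sqrt (-K/(N-1)) * (t * θ)) / Real.sinh (Real.sqrt (-K/(N-1)) * θ)) ^ ((N-1)/N))

/-- The CD(K,N) inequality along some geodesic/optimal coupling from `μ₀` to `μ₁`,
with distortion coefficients `coef`. -/
def CDForWith {α : Type*} [MetricSpace α] [MeasurableSpace α]
    (coef : ℝ → ℝ → ℝ≥0∞) (N : ℝ) (m μ₀ μ₁ : Measure α) : Prop :=
  ∃ (μ : ℝ → Measure α) (q : Measure (α × α)),
    μ 0 = μ₀ ∧ μ 1 = μ₁ ∧ IsW2Geodesic μ ∧ (∀ t ∈ Icc (0:ℝ) 1, μ t ≪ m) ∧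
    IsCoupling q μ₀ μ₁ ∧ (∫⁻ p, edist p.1 p.2 ^ 2 ∂q) = Wsq μ₀ μ₁ ∧
    ∀ t ∈ Icc (0:ℝ) 1,
      ∫⁻ x, ((μ t).rnDeriv m x) ^ (1 - 1/N : ℝ) ∂m ≥
      ∫⁻ p, coef (1-t) (dist p.1 p.2) * (μ₀.rnDeriv m p.1) ^ (-(1/N) : ℝ)
            + coef t (dist p.1 p.2) * (μ₁.rnDeriv m p.2) ^ (-(1/N) : ℝ) ∂q

def CDFor {α : Type*} [MetricSpace α] [MeasurableSpace α]
    (K N : ℝ) (m μ₀ μ₁ : Measure α) : Prop :=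
  CDForWith (fun t θ => tauCoef K N t θ) N m μ₀ μ₁

/-- The curvature-dimension condition CD(K,N). -/
def CD {α : Type*} [MetricSpace α] [MeasurableSpace α] (K N : ℝ) (m : Measure α) : Prop :=
  ∀ μ₀ μ₁ : Measure α, MemP2 μ₀ → MemP2 μ₁ → μ₀ ≪ m → μ₁ ≪ m → CDFor K N m μ₀ μ₁

/-- The support of a measure on a topological space. -/
def mmSupp {α : Type*} [TopologicalSpace α] [MeasurableSpace α] (μ : Measure α) : Set α :=
  {x | ∀ U ∈ nhds x, 0 < μ U}


set_option linter.unusedSectionVars false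
section Helpers
set_option linter.unusedSectionVars false

lemma ennreal_sup_sq_le (u v : ℝ≥0∞) : (u ⊔ v)^2 ≤ u^2 + v^2 := by
  rcases le_total u v with h | h
  · rw [sup_eq_right.2 h]; exact le_add_self
  · rw [sup_eq_left.2 h]; exact le_add_right le_rfl

lemma ennreal_add_sq_le (u v : ℝ≥0∞) : (u + v)^2 ≤ 4 * u^2 + 4 * v^2 := by
  have h1 : u + v ≤ 2 * (u ⊔ v) := by
    rw [two_mul]; exact add_le_add le_sup_left le_sup_right
  calc (u+v)^2 ≤ (2*(u ⊔ v))^2 := pow_le_pow_left' h1 2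
    _ = 4 * (u ⊔ v)^2 := by ring
    _ ≤ 4 * (u^2 + v^2) := mul_le_mul_right (ennreal_sup_sq_le u v) 4
    _ = 4 * u^2 + 4 * v^2 := by ring

variable {X : Type*} [MetricSpace X] [MeasurableSpace X] [BorelSpace X]

lemma IsCoupling.prob_left {q : Measure (X × X)} {μ ν : Measure X} [IsProbabilityMeasure μ]
    (h : IsCoupling q μ ν) : IsProbabilityMeasure q := by
  constructor
  have h2 : (q.map Prod.fst) univ = 1 := by rw [h.1]; exact measure_univ
  rwa [Measure.map_apply measurable_fst MeasurableSet.univ, preimage_univ] at h2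

lemma IsCoupling.lintegral_fst {q : Measure (X × X)} {μ ν : Measure X}
    (h : IsCoupling q μ ν) {f : X → ℝ≥0∞} (hf : Measurable f) :
    ∫⁻ p, f p.1 ∂q = ∫⁻ x, f x ∂μ := by
  rw [← h.1, lintegral_map hf measurable_fst]

lemma IsCoupling.lintegral_snd {q : Measure (X × X)} {μ ν : Measure X}
    (h : IsCoupling q μ ν) {f : X → ℝ≥0∞} (hf : Measurable f) :
    ∫⁻ p, f p.2 ∂q = ∫⁻ x, f x ∂ν := by
  rw [← h.2, lintegral_map hf measurable_snd]

lemma IsCoupling.ae_fst {q : Measure (X × X)} {μ ν : Measure X}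
    (h : IsCoupling q μ ν) {s : Set X} (hs : MeasurableSet s) (hμ : ∀ᵐ x ∂μ, x ∈ s) :
    ∀ᵐ p ∂q, p.1 ∈ s := by
  rw [← h.1] at hμ
  exact (MeasureTheory.ae_map_iff measurable_fst.aemeasurable hs).mp hμ

lemma IsCoupling.ae_snd {q : Measure (X × X)} {μ ν : Measure X}
    (h : IsCoupling q μ ν) {s : Set X} (hs : MeasurableSet s) (hν : ∀ᵐ x ∂ν, x ∈ s) :
    ∀ᵐ p ∂q, p.2 ∈ s := by
  rw [← h.2] at hν
  exact (MeasureTheory.ae_map_iff measurable_snd.aemeasurable hs).mp hν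

lemma isCoupling_prod (μ ν : Measure X) [IsProbabilityMeasure μ] [IsProbabilityMeasure ν] :
    IsCoupling (μ.prod ν) μ ν := by
  constructor
  · rw [Measure.map_fst_prod]; simp
  · rw [Measure.map_snd_prod]; simp

lemma wsq_le_cost {q : Measure (X × X)} {μ ν : Measure X} (h : IsCoupling q μ ν) :
    Wsq μ ν ≤ ∫⁻ p, edist p.1 p.2 ^ 2 ∂q :=
  iInf₂_le q h

lemma sq_W2 (μ ν : Measure X) : (W2 μ ν)^2 = Wsq μ ν := by
  rw [W2, ← ENNReal.rpow_natCast _ 2, ← ENNReal.rpow_mul]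
  norm_num

lemma exists_coupling_of_wsq_lt_top {μ ν : Measure X} (h : Wsq μ ν < ∞) :
    ∃ q, IsCoupling q μ ν ∧ ∫⁻ p, edist p.1 p.2 ^ 2 ∂q < Wsq μ ν + 1 := by
  have h2 : Wsq μ ν < Wsq μ ν + 1 := ENNReal.lt_add_right h.ne one_ne_zero
  conv_lhs at h2 => rw [Wsq]
  obtain ⟨q, hq⟩ := iInf_lt_iff.mp h2
  obtain ⟨hc, hq⟩ := iInf_lt_iff.mp hq
  exact ⟨q, hc, hq⟩

lemma wsq_lt_top {μ ν : Measure X} [IsProbabilityMeasure μ] [IsProbabilityMeasure ν]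
    {z : X} (hμ : ∫⁻ x, edist x z ^ 2 ∂μ ≠ ∞) (hν : ∫⁻ x, edist x z ^ 2 ∂ν ≠ ∞) :
    Wsq μ ν < ∞ := by
  refine lt_of_le_of_lt (wsq_le_cost (isCoupling_prod μ ν)) ?_
  have hmono : ∫⁻ p, edist p.1 p.2 ^ 2 ∂(μ.prod ν)
      ≤ ∫⁻ p : X × X, (4 * edist p.1 z ^ 2 + 4 * edist p.2 z ^ 2) ∂(μ.prod ν) := by
    refine lintegral_mono fun p => ?_
    calc edist p.1 p.2 ^ 2 ≤ (edist p.1 z + edist z p.2)^2 := by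
          exact pow_le_pow_left' (edist_triangle _ _ _) 2
      _ ≤ 4 * edist p.1 z ^2 + 4 * edist z p.2 ^2 := ennreal_add_sq_le _ _
      _ = 4 * edist p.1 z ^2 + 4 * edist p.2 z ^2 := by rw [edist_comm z]
  refine lt_of_le_of_lt hmono ?_
  have hc := isCoupling_prod μ ν
  rw [lintegral_add_left (by fun_prop), lintegral_const_mul _ (by fun_prop),
    lintegral_const_mul _ (by fun_prop)]
  rw [hc.lintegral_fst (f := fun x => edist x z ^ 2) (by fun_prop),
    hc.lintegral_snd (f := fun x => edist x z ^ 2) (by fun_prop)]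
  exact ENNReal.add_lt_top.2 ⟨ENNReal.mul_lt_top (by norm_num) hμ.lt_top,
    ENNReal.mul_lt_top (by norm_num) hν.lt_top⟩

end Helpers
section Helpers2
set_option linter.unusedSectionVars false

variable {X : Type*} [MetricSpace X] [MeasurableSpace X] [BorelSpace X]

/-- Normalized restriction of a measure. -/
def unif (m : Measure X) (A : Set X) : Measure X := (m A)⁻¹ • m.restrict A

lemma unif_prob {m : Measure X} {A : Set X} (h0 : m A ≠ 0) (hfin : m A ≠ ∞) :
    IsProbabilityMeasure (unif m A) := by
  constructor
  rw [unif, Measure.smul_apply, Measure.restrict_apply_univ, smul_eq_mul,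
    ENNReal.inv_mul_cancel h0 hfin]

lemma unif_ac {m : Measure X} {A : Set X} (hA : MeasurableSet A) : unif m A ≪ m := by
  intro s hs
  rw [unif, Measure.smul_apply, Measure.restrict_apply' hA, smul_eq_mul]
  rw [measure_mono_null (inter_subset_left) hs, mul_zero]

lemma unif_ae_mem {m : Measure X} {A : Set X} (hA : MeasurableSet A) :
    ∀ᵐ x ∂(unif m A), x ∈ A := by
  rw [ae_iff]
  have : {x | ¬ x ∈ A} = Aᶜ := rfl
  rw [this, unif, Measure.smul_apply, Measure.restrict_apply' hA, compl_inter_self, measure_empty,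
    smul_eq_mul, mul_zero]

lemma unif_eq_withDensity {m : Measure X} {A : Set X} (hA : MeasurableSet A) :
    unif m A = m.withDensity (A.indicator fun _ => (m A)⁻¹) := by
  rw [withDensity_indicator hA, withDensity_const, unif]

lemma unif_rnDeriv {m : Measure X} [SigmaFinite m] {A : Set X} (hA : MeasurableSet A) :
    (unif m A).rnDeriv m =ᵐ[m] A.indicator fun _ => (m A)⁻¹ := by
  rw [unif_eq_withDensity hA]
  exact Measure.rnDeriv_withDensity m (measurable_const.indicator hA)

lemma unif_moment_lt_top {m : Measure X} {A : Set X} {z : X} {R : ℝ}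
    (h0 : m A ≠ 0) (hfin : m A ≠ ∞) (hsub : A ⊆ Metric.ball z R) :
    ∫⁻ x, edist x z ^ 2 ∂(unif m A) < ∞ := by
  rw [unif, lintegral_smul_measure]
  have hb : ∫⁻ x in A, edist x z ^ 2 ∂m ≤ (ENNReal.ofReal R)^2 * m A := by
    rw [← setLIntegral_const A ((ENNReal.ofReal R)^2)]
    refine setLIntegral_mono measurable_const fun x hx => ?_
    have : edist x z ≤ ENNReal.ofReal R := by
      rw [edist_dist]
      exact ENNReal.ofReal_le_ofReal (le_of_lt (Metric.mem_ball.mp (hsub hx)))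
    exact pow_le_pow_left' this 2
  calc (m A)⁻¹ • ∫⁻ x in A, edist x z ^ 2 ∂m ≤ (m A)⁻¹ * ((ENNReal.ofReal R)^2 * m A) := by
        rw [smul_eq_mul]; exact mul_le_mul_right hb _
    _ < ∞ := by
        refine ENNReal.mul_lt_top ?_ (ENNReal.mul_lt_top ?_ hfin.lt_top)
        · exact ENNReal.inv_lt_top.2 (pos_iff_ne_zero.mpr h0)
        · exact ENNReal.pow_lt_top ENNReal.ofReal_lt_top

lemma unif_memP2 {m : Measure X} {A : Set X} {z : X} {R : ℝ}
    (h0 : m A ≠ 0) (hfin : m A ≠ ∞) (hsub : A ⊆ Metric.ball z R) : MemP2 (unif m A) :=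
  ⟨unif_prob h0 hfin, z, unif_moment_lt_top h0 hfin hsub⟩

lemma unif_lintegral_rpow {m : Measure X} [SigmaFinite m] {A : Set X} (hA : MeasurableSet A)
    (h0 : m A ≠ 0) (hfin : m A ≠ ∞) {e : ℝ} (he : 0 < e) :
    ∫⁻ x, ((unif m A).rnDeriv m x) ^ e ∂m = (m A) ^ (1 - e) := by
  have h1 : ∫⁻ x, ((unif m A).rnDeriv m x) ^ e ∂m
      = ∫⁻ x, (A.indicator (fun _ => (m A)⁻¹) x) ^ e ∂m := by
    refine lintegral_congr_ae ?_
    filter_upwards [unif_rnDeriv hA] with x hx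
    rw [hx]
  rw [h1]
  have h2 : ∀ x, (A.indicator (fun _ => (m A)⁻¹) x) ^ e
      = A.indicator (fun _ => ((m A)⁻¹) ^ e) x := by
    intro x
    by_cases hx : x ∈ A
    · simp [hx]
    · simp [hx, ENNReal.zero_rpow_of_pos he]
  simp_rw [h2]
  rw [lintegral_indicator hA _, setLIntegral_const]
  have h3 : (m A)⁻¹ ^ e * m A = m A ^ (-e) * m A ^ (1:ℝ) := by
    rw [ENNReal.inv_rpow, ← ENNReal.rpow_neg, ENNReal.rpow_one]
  rw [h3, ← ENNReal.rpow_add _ _ h0 hfin]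
  congr 1
  ring

end Helpers2
section TauLemmas

lemma tau_one_eq_top {K N θ : ℝ} (hK : 0 < K) (hθ : Real.pi * Real.sqrt ((N-1)/K) ≤ θ) :
    tauCoef K N 1 θ = ∞ := by
  rw [tauCoef, if_pos hK, if_pos hθ]

lemma tau_half_ge {K N θ : ℝ} (hK : 0 < K) (hN : 1 < N) (hθ : 0 < θ) :
    (2⁻¹ : ℝ≥0∞) ≤ tauCoef K N 2⁻¹ θ := by
  rw [tauCoef, if_pos hK]
  split_ifs with h
  · exact le_top
  push_neg at h
  set c : ℝ := Real.sqrt (K/(N-1)) with hc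
  have hN1 : (0:ℝ) < N - 1 := by linarith
  have hcpos : 0 < c := Real.sqrt_pos.2 (div_pos hK hN1)
  have hprod : (K/(N-1)) * ((N-1)/K) = 1 := by
    field_simp
  have hcL : c * (Real.pi * Real.sqrt ((N-1)/K)) = Real.pi := by
    rw [hc, mul_comm Real.pi, ← mul_assoc, ← Real.sqrt_mul (div_pos hK hN1).le, hprod,
      Real.sqrt_one, one_mul]
  have hθL : c * θ < Real.pi := by
    calc c * θ < c * (Real.pi * Real.sqrt ((N-1)/K)) := mul_lt_mul_of_pos_left h hcpos
      _ = Real.pi := hcL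
  have hθ2 : 0 < c * θ := mul_pos hcpos hθ
  have hhalf_pos : 0 < (c*θ)/2 := by linarith
  have hhalf_lt : (c*θ)/2 < Real.pi/2 := by linarith
  have hsin_pos : 0 < Real.sin ((c*θ)/2) :=
    Real.sin_pos_of_pos_of_lt_pi hhalf_pos (by linarith [Real.pi_pos])
  have hcos_pos : 0 < Real.cos ((c*θ)/2) :=
    Real.cos_pos_of_mem_Ioo ⟨by linarith, hhalf_lt⟩
  have hcos_le : Real.cos ((c*θ)/2) ≤ 1 := Real.cos_le_one _
  have hsin_eq : Real.sin (c*θ) = 2 * Real.sin ((c*θ)/2) * Real.cos ((c*θ)/2) := by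
    rw [← Real.sin_two_mul]; congr 1; ring
  have harg : c * (2⁻¹ * θ) = (c * θ)/2 := by ring
  have hratio : Real.sin (c * (2⁻¹ * θ)) / Real.sin (c * θ)
      = 1 / (2 * Real.cos ((c*θ)/2)) := by
    rw [harg, hsin_eq]
    rw [mul_comm 2 (Real.sin ((c*θ)/2)), mul_assoc]
    rw [div_mul_eq_div_div]
    rw [div_self hsin_pos.ne']
  have hratio_ge : (2:ℝ)⁻¹ ≤ Real.sin (c * (2⁻¹ * θ)) / Real.sin (c * θ) := by
    have h2 := one_div_le_one_div_of_le
      (by positivity : (0:ℝ) < 2 * Real.cos ((c*θ)/2))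
      (by linarith : 2 * Real.cos ((c*θ)/2) ≤ 2)
    rw [hratio]
    rw [show (2:ℝ)⁻¹ = 1/2 by norm_num]
    exact h2
  have hval : (2:ℝ)⁻¹ ≤ (2⁻¹:ℝ) ^ (1/N) * (Real.sin (c*(2⁻¹*θ))/Real.sin (c*θ)) ^ ((N-1)/N) := by
    have hNpos : (0:ℝ) < N := by linarith
    have h1 : ((2:ℝ)⁻¹) ^ ((N-1)/N) ≤ (Real.sin (c*(2⁻¹*θ))/Real.sin (c*θ)) ^ ((N-1)/N) :=
      Real.rpow_le_rpow (by norm_num) hratio_ge (by positivity)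
    calc (2:ℝ)⁻¹ = (2⁻¹:ℝ) ^ (1/N) * (2⁻¹:ℝ) ^ ((N-1)/N) := by
          rw [← Real.rpow_add (by norm_num)]
          rw [show 1/N + (N-1)/N = 1 by field_simp; ring]
          rw [Real.rpow_one]
      _ ≤ _ := mul_le_mul_of_nonneg_left h1 (by positivity)
  calc (2⁻¹:ℝ≥0∞) = ENNReal.ofReal 2⁻¹ := by
        rw [ENNReal.ofReal_inv_of_pos (by norm_num : (0:ℝ) < 2), ENNReal.ofReal_ofNat]
    _ ≤ _ := ENNReal.ofReal_le_ofReal hval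

end TauLemmas
section Holder
set_option linter.unusedSectionVars false

variable {X : Type*} [MetricSpace X] [MeasurableSpace X] [BorelSpace X]

/-- Hölder bound: the `(1-1/N)`-energy of a probability density concentrated on `S` is at most
`m S ^ (1/N)`. -/
lemma holder_density_bound {m : Measure X} [SigmaFinite m] {ν : Measure X}
    [IsProbabilityMeasure ν] (hac : ν ≪ m) {S : Set X} (hS : MeasurableSet S)
    (hνS : ν Sᶜ = 0) {N : ℝ} (hN : 1 < N) :
    ∫⁻ x, (ν.rnDeriv m x) ^ (1 - 1/N) ∂m ≤ (m S) ^ (1/N) := by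
  have hNpos : (0:ℝ) < N := by linarith
  have he : (0:ℝ) < 1 - 1/N := by
    rw [sub_pos, div_lt_one hNpos]; exact hN
  set ρ := ν.rnDeriv m with hρ
  have hρm : Measurable ρ := Measure.measurable_rnDeriv ν m
  rw [← lintegral_add_compl (fun x => ρ x ^ (1 - 1/N)) hS]
  have hcompl : ∫⁻ x in Sᶜ, ρ x ^ (1 - 1/N) ∂m = 0 := by
    have h0 : ∫⁻ x in Sᶜ, ρ x ∂m = 0 := by
      rw [Measure.setLIntegral_rnDeriv hac]; exact hνS
    have h1 : ∀ᵐ x ∂(m.restrict Sᶜ), ρ x = 0 := by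
      rw [ae_restrict_iff' hS.compl]
      exact (setLIntegral_eq_zero_iff hS.compl hρm).mp h0
    rw [← lintegral_zero (μ := m.restrict Sᶜ)]
    refine lintegral_congr_ae ?_
    filter_upwards [h1] with x hx
    rw [hx, ENNReal.zero_rpow_of_pos he]
  rw [hcompl, add_zero]
  -- Hölder on S
  have hpq : Real.HolderConjugate (N / (N-1)) N := by
    rw [Real.holderConjugate_iff]
    constructor
    · rw [lt_div_iff₀ (by linarith)]; linarith
    · rw [inv_div, inv_eq_one_div]
      field_simp
      ring
  have hH := ENNReal.lintegral_mul_le_Lp_mul_Lq (m.restrict S) hpq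
    (f := fun x => ρ x ^ (1 - 1/N)) (g := fun _ => 1)
    (hρm.pow_const _).aemeasurable aemeasurable_const
  simp only [mul_one, Pi.mul_apply] at hH
  have h2 : ∀ x, (ρ x ^ (1 - 1/N)) ^ (N / (N-1)) = ρ x := by
    intro x
    rw [← ENNReal.rpow_mul]
    rw [show (1 - 1/N) * (N/(N-1)) = 1 by
      have hN0 : N ≠ 0 := hNpos.ne'
      have hN1 : N - (1:ℝ) ≠ 0 := by intro hcon; rw [sub_eq_zero] at hcon; simp [← hcon] at hN
      field_simp]
    exact ENNReal.rpow_one _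
  simp_rw [h2] at hH
  have h3 : ∫⁻ x in S, ρ x ∂m ≤ 1 := by
    rw [Measure.setLIntegral_rnDeriv hac]
    exact prob_le_one
  have h4 : (∫⁻ x in S, ρ x ∂m) ^ (1 / (N/(N-1))) ≤ 1 :=
    ENNReal.rpow_le_one h3 (by rw [one_div, inv_div]; exact div_nonneg (by linarith) (by linarith))
  have h5 : (∫⁻ _ in S, (1:ℝ≥0∞) ^ N ∂m) ^ (1/N) = (m S) ^ (1/N) := by
    simp [ENNReal.one_rpow]
  calc ∫⁻ x in S, ρ x ^ (1 - 1/N) ∂m ≤ _ := hH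
    _ ≤ 1 * (m S) ^ (1/N) := by
        rw [h5] at *
        exact mul_le_mul_left h4 _
    _ = (m S) ^ (1/N) := one_mul _

end Holder
section Midpoint
set_option linter.unusedSectionVars false
set_option maxHeartbeats 1000000

open ProbabilityTheory

lemma two_mul_quarter (c : ℝ≥0∞) : 2 * (c/4) + 2 * (c/4) = c := by
  rw [← add_mul, show (2:ℝ≥0∞)+2 = 4 by norm_num,
    ENNReal.mul_div_cancel' (by norm_num) (by norm_num)]

variable {X : Type*} [MetricSpace X] [CompleteSpace X] [TopologicalSpace.SeparableSpace X]
  [MeasurableSpace X] [BorelSpace X]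

lemma midpoint_conc [Nonempty X] {μ₀ ν μ₁ : Measure X}
    [IsProbabilityMeasure μ₀] [IsProbabilityMeasure ν] [IsProbabilityMeasure μ₁]
    {q' q'' : Measure (X × X)} (hc1 : IsCoupling q' μ₀ ν) (hc2 : IsCoupling q'' ν μ₁)
    {c : ℝ≥0∞} (hcfin : c ≠ ∞) (hW : c ≤ Wsq μ₀ μ₁)
    (hcost1 : ∫⁻ p, edist p.1 p.2 ^ 2 ∂q' = c / 4)
    (hcost2 : ∫⁻ p, edist p.1 p.2 ^ 2 ∂q'' = c / 4)
    {x₀ : X} {δ r : ℝ} (h₀ : ∀ᵐ x ∂μ₀, dist x₀ x ≤ δ) (h₁ : ∀ᵐ z ∂μ₁, dist x₀ z ≤ r) :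
    ∀ᵐ y ∂ν, dist x₀ y ≤ δ + (δ + r)/2 := by
  haveI : SecondCountableTopology X := UniformSpace.secondCountable_of_separable X
  haveI : IsProbabilityMeasure q' := hc1.prob_left
  haveI : IsProbabilityMeasure q'' := hc2.prob_left
  have hfst : q''.fst = ν := hc2.1
  set κ : Kernel X X := q''.condKernel with hκ
  set κ' : Kernel (X × X) X := κ.comap Prod.snd measurable_snd with hκ'
  set P : Measure ((X × X) × X) := q'.compProd κ' with hP
  have hP1 : P.map Prod.fst = q' := Measure.fst_compProd q' κ'
  have hmeas23 : Measurable fun (p : (X×X)×X) => (p.1.2, p.2) := by fun_prop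
  have hmeas13 : Measurable fun (p : (X×X)×X) => (p.1.1, p.2) := by fun_prop
  have hP23 : P.map (fun p => (p.1.2, p.2)) = q'' := by
    ext s hs
    rw [Measure.map_apply hmeas23 hs, hP, Measure.compProd_apply (hmeas23 hs)]
    calc ∫⁻ a, κ' a (Prod.mk a ⁻¹' ((fun p : (X×X)×X => (p.1.2,p.2)) ⁻¹' s)) ∂q'
        = ∫⁻ a : X×X, (fun y => κ y (Prod.mk y ⁻¹' s)) a.2 ∂q' := by
          refine lintegral_congr fun a => ?_
          rw [show (Prod.mk a ⁻¹' ((fun p : (X×X)×X => (p.1.2,p.2)) ⁻¹' s))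
            = Prod.mk a.2 ⁻¹' s from rfl, hκ', Kernel.comap_apply]
      _ = ∫⁻ y, κ y (Prod.mk y ⁻¹' s) ∂ν :=
          hc1.lintegral_snd (Kernel.measurable_kernel_prodMk_left hs)
      _ = (ν.compProd κ) s := (Measure.compProd_apply hs).symm
      _ = q'' s := by rw [hκ, ← hfst, q''.disintegrate q''.condKernel]
  have hm1 : P.map (fun p => p.1.1) = μ₀ := by
    rw [show (fun p : (X×X)×X => p.1.1) = Prod.fst ∘ Prod.fst from rfl,
      ← Measure.map_map measurable_fst measurable_fst, hP1, hc1.1]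
  have hm2 : P.map (fun p => p.1.2) = ν := by
    rw [show (fun p : (X×X)×X => p.1.2) = Prod.snd ∘ Prod.fst from rfl,
      ← Measure.map_map measurable_snd measurable_fst, hP1, hc1.2]
  have hm3 : P.map (fun p => p.2) = μ₁ := by
    rw [show (fun p : (X×X)×X => p.2) = Prod.snd ∘ (fun p : (X×X)×X => (p.1.2, p.2)) from rfl,
      ← Measure.map_map measurable_snd hmeas23, hP23, hc2.2]
  have hc13 : IsCoupling (P.map fun p => (p.1.1, p.2)) μ₀ μ₁ := by
    constructor
    · rw [Measure.map_map measurable_fst hmeas13]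
      exact hm1
    · rw [Measure.map_map measurable_snd hmeas13]
      exact hm3
  -- squared-distance integrals
  have hF : ∫⁻ p, edist p.1.1 p.1.2 ^ 2 ∂P = c/4 := by
    rw [← hcost1, ← hP1, lintegral_map (by fun_prop) measurable_fst]
  have hG : ∫⁻ p, edist p.1.2 p.2 ^ 2 ∂P = c/4 := by
    rw [← hcost2, ← hP23, lintegral_map (by fun_prop) hmeas23]
  have hHge : c ≤ ∫⁻ p, edist p.1.1 p.2 ^ 2 ∂P := by
    refine le_trans hW (le_trans (wsq_le_cost hc13) ?_)
    rw [lintegral_map (by fun_prop) hmeas13]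
  have hedist2 : ∀ (a b : X), edist a b ^ 2 = ENNReal.ofReal (dist a b ^ 2) := fun a b => by
    rw [edist_dist, ← ENNReal.ofReal_pow dist_nonneg]
  simp_rw [hedist2] at hF hG hHge
  -- pointwise inequalities
  have hsum_pt : ∀ p : (X×X)×X, ENNReal.ofReal ((dist p.1.1 p.1.2 + dist p.1.2 p.2)^2)
      ≤ 2 * ENNReal.ofReal (dist p.1.1 p.1.2 ^ 2) + 2 * ENNReal.ofReal (dist p.1.2 p.2 ^ 2) := by
    intro p
    have hr : (dist p.1.1 p.1.2 + dist p.1.2 p.2)^2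
        ≤ 2*(dist p.1.1 p.1.2 ^2) + 2*(dist p.1.2 p.2 ^2) := by
      nlinarith [sq_nonneg (dist p.1.1 p.1.2 - dist p.1.2 p.2)]
    calc ENNReal.ofReal ((dist p.1.1 p.1.2 + dist p.1.2 p.2)^2)
        ≤ ENNReal.ofReal (2*(dist p.1.1 p.1.2 ^2) + 2*(dist p.1.2 p.2 ^2)) :=
          ENNReal.ofReal_le_ofReal hr
      _ = _ := by
          rw [ENNReal.ofReal_add (by positivity) (by positivity),
            ENNReal.ofReal_mul (by norm_num), ENNReal.ofReal_mul (by norm_num),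
            ENNReal.ofReal_ofNat]
  have hFG_le : ∫⁻ p : (X×X)×X, ENNReal.ofReal ((dist p.1.1 p.1.2 + dist p.1.2 p.2)^2) ∂P
      ≤ c := by
    calc ∫⁻ p : (X×X)×X, ENNReal.ofReal ((dist p.1.1 p.1.2 + dist p.1.2 p.2)^2) ∂P
        ≤ ∫⁻ p : (X×X)×X, (2 * ENNReal.ofReal (dist p.1.1 p.1.2 ^ 2)
            + 2 * ENNReal.ofReal (dist p.1.2 p.2 ^ 2)) ∂P := lintegral_mono hsum_pt
      _ = 2 * (c/4) + 2 * (c/4) := by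
          rw [lintegral_add_left (by fun_prop), lintegral_const_mul _ (by fun_prop),
            lintegral_const_mul _ (by fun_prop), hF, hG]
      _ = c := two_mul_quarter c
  have htri_pt : ∀ p : (X×X)×X, ENNReal.ofReal (dist p.1.1 p.2 ^2)
      ≤ ENNReal.ofReal ((dist p.1.1 p.1.2 + dist p.1.2 p.2)^2) := fun p =>
    ENNReal.ofReal_le_ofReal (by
      have := dist_triangle p.1.1 p.1.2 p.2
      nlinarith [dist_nonneg (x := p.1.1) (y := p.2), dist_nonneg (x := p.1.1) (y := p.1.2),
        dist_nonneg (x := p.1.2) (y := p.2)])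
  have hHle : ∫⁻ p : (X×X)×X, ENNReal.ofReal (dist p.1.1 p.2 ^2) ∂P
      ≤ ∫⁻ p : (X×X)×X, ENNReal.ofReal ((dist p.1.1 p.1.2 + dist p.1.2 p.2)^2) ∂P :=
    lintegral_mono htri_pt
  have hHeq : ∫⁻ p : (X×X)×X, ENNReal.ofReal (dist p.1.1 p.2 ^2) ∂P = c :=
    le_antisymm (hHle.trans hFG_le) hHge
  have hFGeq : ∫⁻ p : (X×X)×X, ENNReal.ofReal ((dist p.1.1 p.1.2 + dist p.1.2 p.2)^2) ∂P = c :=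
    le_antisymm hFG_le (hHeq ▸ hHle)
  -- a.e. H = F + G
  have hsubA : ∫⁻ p : (X×X)×X,
      (ENNReal.ofReal ((dist p.1.1 p.1.2 + dist p.1.2 p.2)^2)
        - ENNReal.ofReal (dist p.1.1 p.2 ^2)) ∂P = 0 := by
    rw [lintegral_sub (by fun_prop) (by rw [hHeq]; exact hcfin) (ae_of_all _ htri_pt),
      hHeq, hFGeq, tsub_self]
  have hA : ∀ᵐ p : (X×X)×X ∂P, dist p.1.1 p.2 = dist p.1.1 p.1.2 + dist p.1.2 p.2 := by
    have h0 := (lintegral_eq_zero_iff (by fun_prop : Measurable fun p : (X×X)×X =>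
      ENNReal.ofReal ((dist p.1.1 p.1.2 + dist p.1.2 p.2)^2)
        - ENNReal.ofReal (dist p.1.1 p.2 ^2))).mp hsubA
    filter_upwards [h0] with p hp
    have hle : ENNReal.ofReal ((dist p.1.1 p.1.2 + dist p.1.2 p.2)^2)
        ≤ ENNReal.ofReal (dist p.1.1 p.2 ^2) := tsub_eq_zero_iff_le.mp hp
    have heq : (dist p.1.1 p.1.2 + dist p.1.2 p.2)^2 = dist p.1.1 p.2 ^2 := by
      have h2 := (ENNReal.ofReal_le_ofReal_iff (by positivity)).mp hle
      have h3 := (ENNReal.ofReal_le_ofReal_iff (by positivity)).mp (htri_pt p)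
      linarith
    have h4 : dist p.1.1 p.1.2 + dist p.1.2 p.2 = dist p.1.1 p.2 := by
      have h5 : |dist p.1.1 p.1.2 + dist p.1.2 p.2| = |dist p.1.1 p.2| :=
        (sq_eq_sq_iff_abs_eq_abs _ _).mp heq
      rwa [abs_of_nonneg (by positivity), abs_of_nonneg dist_nonneg] at h5
    exact h4.symm
  -- a.e. F = G
  have hptB : ∀ p : (X×X)×X, ENNReal.ofReal ((dist p.1.1 p.1.2 - dist p.1.2 p.2)^2)
      = (2 * ENNReal.ofReal (dist p.1.1 p.1.2 ^ 2) + 2 * ENNReal.ofReal (dist p.1.2 p.2 ^ 2))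
        - ENNReal.ofReal ((dist p.1.1 p.1.2 + dist p.1.2 p.2)^2) := by
    intro p
    have hr : (dist p.1.1 p.1.2 - dist p.1.2 p.2)^2
        = (2*(dist p.1.1 p.1.2 ^2) + 2*(dist p.1.2 p.2 ^2))
          - (dist p.1.1 p.1.2 + dist p.1.2 p.2)^2 := by ring
    rw [hr, ENNReal.ofReal_sub _ (by positivity)]
    congr 1
    rw [ENNReal.ofReal_add (by positivity) (by positivity),
      ENNReal.ofReal_mul (by norm_num), ENNReal.ofReal_mul (by norm_num),
      ENNReal.ofReal_ofNat]
  have hsubB : ∫⁻ p : (X×X)×X,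
      ENNReal.ofReal ((dist p.1.1 p.1.2 - dist p.1.2 p.2)^2) ∂P = 0 := by
    simp_rw [hptB]
    rw [lintegral_sub (by fun_prop) (by rw [hFGeq]; exact hcfin) (ae_of_all _ hsum_pt)]
    rw [hFGeq, lintegral_add_left (by fun_prop), lintegral_const_mul _ (by fun_prop),
      lintegral_const_mul _ (by fun_prop), hF, hG, two_mul_quarter, tsub_self]
  have hB : ∀ᵐ p : (X×X)×X ∂P, dist p.1.1 p.1.2 = dist p.1.2 p.2 := by
    have h0 := (lintegral_eq_zero_iff (by fun_prop : Measurable fun p : (X×X)×X =>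
      ENNReal.ofReal ((dist p.1.1 p.1.2 - dist p.1.2 p.2)^2))).mp hsubB
    filter_upwards [h0] with p hp
    simp only [Pi.zero_apply, ENNReal.ofReal_eq_zero] at hp
    have h1 : (dist p.1.1 p.1.2 - dist p.1.2 p.2)^2 = 0 := le_antisymm hp (sq_nonneg _)
    have h2 : dist p.1.1 p.1.2 - dist p.1.2 p.2 = 0 := by
      exact pow_eq_zero_iff (by norm_num) |>.mp h1
    linarith
  -- marginal supports
  have hset0 : MeasurableSet {x : X | dist x₀ x ≤ δ} :=
    measurableSet_le (by fun_prop) measurable_const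
  have hset1 : MeasurableSet {x : X | dist x₀ x ≤ r} :=
    measurableSet_le (by fun_prop) measurable_const
  have hae0 : ∀ᵐ p : (X×X)×X ∂P, dist x₀ p.1.1 ≤ δ := by
    rw [← hm1] at h₀
    exact (ae_map_iff (by fun_prop) hset0).mp h₀
  have hae1 : ∀ᵐ p : (X×X)×X ∂P, dist x₀ p.2 ≤ r := by
    rw [← hm3] at h₁
    exact (ae_map_iff (by fun_prop) hset1).mp h₁
  have hfinal : ∀ᵐ p : (X×X)×X ∂P, dist x₀ p.1.2 ≤ δ + (δ + r)/2 := by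
    filter_upwards [hA, hB, hae0, hae1] with p h1 h2 h3 h4
    have htri1 : dist x₀ p.1.2 ≤ dist x₀ p.1.1 + dist p.1.1 p.1.2 := dist_triangle _ _ _
    have hhalf : dist p.1.1 p.1.2 = dist p.1.1 p.2 / 2 := by
      rw [h2] at h1 ⊢
      linarith
    have hfar : dist p.1.1 p.2 ≤ δ + r := by
      calc dist p.1.1 p.2 ≤ dist p.1.1 x₀ + dist x₀ p.2 := dist_triangle _ _ _
        _ ≤ δ + r := by rw [dist_comm]; exact add_le_add h3 h4
    linarith
  rw [← hm2]
  exact (ae_map_iff (by fun_prop) (measurableSet_le (by fun_prop) measurable_const)).mpr hfinal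

end Midpoint
section KeyDoubling
set_option linter.unusedSectionVars false
set_option maxHeartbeats 1000000

variable {X : Type*} [MetricSpace X] [CompleteSpace X] [TopologicalSpace.SeparableSpace X]
  [MeasurableSpace X] [BorelSpace X]

lemma keyDoubling [Nonempty X] (m : Measure X) [SigmaFinite m]
    {K N : ℝ} (hK : 0 < K) (hN : 1 < N) (hCD : CD K N m)
    {x₀ : X} {δ r : ℝ} (hb0 : m (Metric.ball x₀ δ) ≠ 0) (hbfin : m (Metric.ball x₀ δ) ≠ ∞)
    {A : Set X} (hAm : MeasurableSet A) (hAr : A ⊆ Metric.ball x₀ r)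
    (hdisj : Disjoint A (Metric.ball x₀ δ)) (hA0 : m A ≠ 0) (hAfin : m A ≠ ∞) :
    m A ≤ 2 ^ N * m (Metric.closedBall x₀ (r/2 + 2*δ)) := by
  set B := Metric.ball x₀ δ with hB
  set μ₀ := unif m B with hμ₀d
  set μ₁ := unif m A with hμ₁d
  haveI : IsProbabilityMeasure μ₀ := unif_prob hb0 hbfin
  haveI : IsProbabilityMeasure μ₁ := unif_prob hA0 hAfin
  have hP0 : MemP2 μ₀ := unif_memP2 hb0 hbfin subset_rfl
  have hP1 : MemP2 μ₁ := unif_memP2 hA0 hAfin hAr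
  have hac0 : μ₀ ≪ m := unif_ac Metric.isOpen_ball.measurableSet
  have hac1 : μ₁ ≪ m := unif_ac hAm
  have hcd : CDForWith (fun t θ => tauCoef K N t θ) N m μ₀ μ₁ := hCD μ₀ μ₁ hP0 hP1 hac0 hac1
  obtain ⟨μ, q, hμ0, hμ1, hgeo, hact, hcoup, hopt, hineq⟩ := hcd
  have hmem : (2⁻¹:ℝ) ∈ Icc (0:ℝ) 1 := by norm_num
  set ν := μ 2⁻¹ with hνd
  have hacν : ν ≪ m := hact 2⁻¹ hmem
  -- finiteness of the transport cost
  have hc_fin : Wsq μ₀ μ₁ < ∞ :=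
    wsq_lt_top (z := x₀) (unif_moment_lt_top hb0 hbfin subset_rfl).ne
      (unif_moment_lt_top hA0 hAfin hAr).ne
  set c := Wsq μ₀ μ₁ with hcd2
  -- quarter values along the geodesic
  have hιv : (ENNReal.ofReal |(0:ℝ) - 2⁻¹|) = 2⁻¹ := by
    rw [show |(0:ℝ) - 2⁻¹| = 2⁻¹ by norm_num,
      ENNReal.ofReal_inv_of_pos (by norm_num : (0:ℝ) < 2), ENNReal.ofReal_ofNat]
  have hιv' : (ENNReal.ofReal |(2⁻¹:ℝ) - 1|) = 2⁻¹ := by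
    rw [show |(2⁻¹:ℝ) - 1| = 2⁻¹ by rw [abs_sub_comm]; norm_num,
      ENNReal.ofReal_inv_of_pos (by norm_num : (0:ℝ) < 2), ENNReal.ofReal_ofNat]
  have hsq_half : ((2⁻¹:ℝ≥0∞))^2 * c = c / 4 := by
    rw [← ENNReal.inv_pow, show ((2:ℝ≥0∞)^2) = 4 by norm_num, div_eq_mul_inv, mul_comm]
  have hWq0 : Wsq μ₀ ν = c / 4 := by
    have h := hgeo 0 ⟨le_rfl, zero_le_one⟩ 2⁻¹ hmem
    rw [hμ0, hμ1, hιv] at h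
    rw [← sq_W2, h]
    rw [mul_pow, sq_W2, ← hcd2]
    exact hsq_half
  have hWq1 : Wsq ν μ₁ = c / 4 := by
    have h := hgeo 2⁻¹ hmem 1 ⟨zero_le_one, le_rfl⟩
    rw [hμ0, hμ1, hιv'] at h
    rw [← sq_W2, h, mul_pow, sq_W2, ← hcd2]
    exact hsq_half
  have hc4fin : c / 4 < ∞ := ENNReal.div_lt_top hc_fin.ne (by norm_num)
  -- ν is a probability measure with finite second moment
  obtain ⟨q₀, hq₀c, hq₀cost⟩ := exists_coupling_of_wsq_lt_top (μ := μ₀) (ν := ν)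
    (by rw [hWq0]; exact hc4fin)
  haveI : IsProbabilityMeasure ν := by
    constructor
    have hq0univ : q₀ univ = 1 := by
      have h := congrArg (fun ρ : Measure X => ρ univ) hq₀c.1
      simpa [Measure.map_apply measurable_fst MeasurableSet.univ] using h
    rw [← hq₀c.2, Measure.map_apply measurable_snd MeasurableSet.univ, preimage_univ, hq0univ]
  have hνmom : ∫⁻ y, edist y x₀ ^ 2 ∂ν < ∞ := by
    have h1 : ∫⁻ y, edist y x₀ ^ 2 ∂ν = ∫⁻ p, edist p.2 x₀ ^ 2 ∂q₀ :=
      (hq₀c.lintegral_snd (f := fun y => edist y x₀ ^ 2) (by fun_prop)).symm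
    rw [h1]
    have h2 : ∫⁻ p, edist p.2 x₀ ^ 2 ∂q₀
        ≤ ∫⁻ p : X × X, (4 * edist p.1 p.2 ^ 2 + 4 * edist p.1 x₀ ^ 2) ∂q₀ := by
      refine lintegral_mono fun p => ?_
      calc edist p.2 x₀ ^ 2 ≤ (edist p.2 p.1 + edist p.1 x₀)^2 :=
            pow_le_pow_left' (edist_triangle _ _ _) 2
        _ ≤ 4 * edist p.2 p.1 ^2 + 4 * edist p.1 x₀ ^2 := ennreal_add_sq_le _ _
        _ = 4 * edist p.1 p.2 ^2 + 4 * edist p.1 x₀ ^2 := by rw [edist_comm p.2 p.1]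
    refine lt_of_le_of_lt h2 ?_
    rw [lintegral_add_left (by fun_prop), lintegral_const_mul _ (by fun_prop),
      lintegral_const_mul _ (by fun_prop),
      hq₀c.lintegral_fst (f := fun x => edist x x₀ ^ 2) (by fun_prop)]
    refine ENNReal.add_lt_top.2 ⟨ENNReal.mul_lt_top (by norm_num) ?_,
      ENNReal.mul_lt_top (by norm_num) (unif_moment_lt_top hb0 hbfin subset_rfl)⟩
    exact hq₀cost.trans (by rw [hWq0]; exact ENNReal.add_lt_top.2 ⟨hc4fin, ENNReal.one_lt_top⟩)
  have hPν : MemP2 ν := ⟨inferInstance, x₀, hνmom⟩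
  obtain ⟨-, q', -, -, -, -, hq'c, hq'opt, -⟩ :
      CDForWith (fun t θ => tauCoef K N t θ) N m μ₀ ν := hCD μ₀ ν hP0 hPν hac0 hacν
  obtain ⟨-, q'', -, -, -, -, hq''c, hq''opt, -⟩ :
      CDForWith (fun t θ => tauCoef K N t θ) N m ν μ₁ := hCD ν μ₁ hPν hP1 hacν hac1
  have h₀ : ∀ᵐ x ∂μ₀, dist x₀ x ≤ δ := by
    filter_upwards [unif_ae_mem (m := m) Metric.isOpen_ball.measurableSet] with x hx
    rw [dist_comm]
    exact le_of_lt (Metric.mem_ball.mp hx)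
  have h₁ : ∀ᵐ z ∂μ₁, dist x₀ z ≤ r := by
    filter_upwards [unif_ae_mem (m := m) hAm] with z hz
    rw [dist_comm]
    exact le_of_lt (Metric.mem_ball.mp (hAr hz))
  have hconc : ∀ᵐ y ∂ν, dist x₀ y ≤ δ + (δ + r)/2 :=
    midpoint_conc hq'c hq''c hc_fin.ne le_rfl (by rw [hq'opt]; exact hWq0)
      (by rw [hq''opt]; exact hWq1) h₀ h₁
  set S := Metric.closedBall x₀ (r/2 + 2*δ) with hS
  have hbpos : (0:ℝ) < δ := by
    rcases le_or_gt δ 0 with h | h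
    · exact absurd (by rw [hB, Metric.ball_eq_empty.2 h]; exact measure_empty) hb0
    · exact h
  have hνS : ν Sᶜ = 0 := by
    have h3 : ∀ᵐ y ∂ν, y ∈ S := by
      filter_upwards [hconc] with y hy
      rw [hS, Metric.mem_closedBall, dist_comm]
      linarith
    exact ae_iff.mp h3
  have hLHS := holder_density_bound (m := m) hacν measurableSet_closedBall hνS hN
  have hineq2 := hineq 2⁻¹ hmem
  haveI : IsProbabilityMeasure q := hcoup.prob_left
  have hq_aeB : ∀ᵐ p ∂q, p.1 ∈ B :=
    hcoup.ae_fst Metric.isOpen_ball.measurableSet (unif_ae_mem Metric.isOpen_ball.measurableSet)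
  have hrnset : MeasurableSet {x : X | μ₁.rnDeriv m x = (m A)⁻¹} :=
    (Measure.measurable_rnDeriv μ₁ m) (measurableSet_singleton _)
  have hμ₁rn : ∀ᵐ x ∂μ₁, x ∈ A ∩ {x : X | μ₁.rnDeriv m x = (m A)⁻¹} := by
    filter_upwards [unif_ae_mem hAm, (unif_rnDeriv hAm).filter_mono hac1.ae_le] with x hx1 hx2
    refine ⟨hx1, ?_⟩
    rw [mem_setOf_eq, hx2, indicator_of_mem hx1]
  have hq_aeA : ∀ᵐ p ∂q, p.2 ∈ A ∩ {x : X | μ₁.rnDeriv m x = (m A)⁻¹} :=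
    hcoup.ae_snd (hAm.inter hrnset) hμ₁rn
  have hRHS : (2⁻¹ : ℝ≥0∞) * (m A)^(1/N) ≤
      ∫⁻ p, tauCoef K N (1-2⁻¹) (dist p.1 p.2) * (μ₀.rnDeriv m p.1)^(-(1/N) : ℝ)
        + tauCoef K N 2⁻¹ (dist p.1 p.2) * (μ₁.rnDeriv m p.2)^(-(1/N) : ℝ) ∂q := by
    have hconst : (2⁻¹:ℝ≥0∞) * (m A)^(1/N) = ∫⁻ _, (2⁻¹:ℝ≥0∞) * (m A)^(1/N) ∂q := by
      rw [lintegral_const, measure_univ, mul_one]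
    rw [hconst]
    refine lintegral_mono_ae ?_
    filter_upwards [hq_aeB, hq_aeA] with p hp1 hp2
    have hne : p.1 ≠ p.2 := fun he => Set.disjoint_left.mp hdisj hp2.1 (he ▸ hp1)
    have hdp : 0 < dist p.1 p.2 := dist_pos.2 hne
    have htau := tau_half_ge (θ := dist p.1 p.2) hK hN hdp
    have hrn : (μ₁.rnDeriv m p.2)^(-(1/N) : ℝ) = (m A)^(1/N) := by
      have h6 : μ₁.rnDeriv m p.2 = (m A)⁻¹ := hp2.2
      rw [h6, ENNReal.inv_rpow, ENNReal.rpow_neg, inv_inv]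
    calc (2⁻¹:ℝ≥0∞) * (m A)^(1/N)
        ≤ tauCoef K N 2⁻¹ (dist p.1 p.2) * (μ₁.rnDeriv m p.2)^(-(1/N) : ℝ) := by
          rw [hrn]; exact mul_le_mul_left htau _
      _ ≤ _ := le_add_self
  have hchain : (2⁻¹:ℝ≥0∞) * (m A)^(1/N) ≤ (m S)^(1/N) :=
    le_trans hRHS (le_trans hineq2 hLHS)
  have hNnn : (0:ℝ) ≤ N := by linarith
  have hpow := ENNReal.rpow_le_rpow hchain hNnn
  have hNne : N ≠ 0 := by linarith
  have h4 : ((m S)^(1/N))^N = m S := by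
    rw [← ENNReal.rpow_mul, show (1/N)*N = 1 by field_simp, ENNReal.rpow_one]
  have h5 : ((2⁻¹:ℝ≥0∞) * (m A)^(1/N))^N = ((2:ℝ≥0∞)^N)⁻¹ * m A := by
    rw [ENNReal.mul_rpow_of_nonneg _ _ hNnn, ← ENNReal.rpow_mul,
      show (1/N)*N = 1 by field_simp, ENNReal.rpow_one, ENNReal.inv_rpow]
  rw [h4, h5] at hpow
  have h2N0 : (2:ℝ≥0∞)^N ≠ 0 := (ENNReal.rpow_pos (by norm_num) (by norm_num)).ne'
  have h2Nt : (2:ℝ≥0∞)^N ≠ ∞ := (ENNReal.rpow_lt_top_of_nonneg hNnn (by norm_num)).ne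
  calc m A = 2^N * (((2:ℝ≥0∞)^N)⁻¹ * m A) := by
        rw [← mul_assoc, ENNReal.mul_inv_cancel h2N0 h2Nt, one_mul]
    _ ≤ 2^N * m S := mul_le_mul_right hpow _

end KeyDoubling
section Diameter
set_option linter.unusedSectionVars false
set_option maxHeartbeats 1000000

variable {X : Type*} [MetricSpace X] [CompleteSpace X] [TopologicalSpace.SeparableSpace X]
  [MeasurableSpace X] [BorelSpace X]

lemma ball_pos_of_supp {m : Measure X} (hsupp : mmSupp m = Set.univ) (z : X) {ρ : ℝ}
    (hρ : 0 < ρ) : m (Metric.ball z ρ) ≠ 0 := by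
  have hz : z ∈ mmSupp m := by rw [hsupp]; trivial
  exact (hz _ (Metric.ball_mem_nhds z hρ)).ne'

lemma exists_small_ball_fin (m : Measure X) [IsLocallyFiniteMeasure m] (z : X) :
    ∃ ρ : ℝ, 0 < ρ ∧ m (Metric.ball z ρ) < ∞ := by
  obtain ⟨s, hs, hsfin⟩ := m.finiteAt_nhds z
  obtain ⟨ρ, hρ, hballs⟩ := Metric.mem_nhds_iff.mp hs
  exact ⟨ρ, hρ, lt_of_le_of_lt (measure_mono hballs) hsfin⟩

lemma dist_le_of_CD (m : Measure X) [IsLocallyFiniteMeasure m] [SigmaFinite m]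
    (hsupp : mmSupp m = Set.univ) {K N : ℝ} (hK : 0 < K) (hN : 1 < N) (hCD : CD K N m)
    (x y : X) : dist x y ≤ Real.pi * Real.sqrt ((N - 1) / K) := by
  set L := Real.pi * Real.sqrt ((N - 1) / K) with hL
  by_contra hxy
  push_neg at hxy
  set ε := (dist x y - L)/3 with hε
  have hεpos : 0 < ε := by
    rw [hε]; linarith
  obtain ⟨ρ₀, hρ₀, hfin₀⟩ := exists_small_ball_fin m x
  obtain ⟨ρ₁, hρ₁, hfin₁⟩ := exists_small_ball_fin m y
  set δ₀ := min ρ₀ ε with hδ₀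
  set δ₁ := min ρ₁ ε with hδ₁
  have hδ₀pos : 0 < δ₀ := lt_min hρ₀ hεpos
  have hδ₁pos : 0 < δ₁ := lt_min hρ₁ hεpos
  set B₀ := Metric.ball x δ₀ with hB₀
  set B₁ := Metric.ball y δ₁ with hB₁
  have hb0 : m B₀ ≠ 0 := ball_pos_of_supp hsupp x hδ₀pos
  have hb1 : m B₁ ≠ 0 := ball_pos_of_supp hsupp y hδ₁pos
  have hbf0 : m B₀ ≠ ∞ :=
    (lt_of_le_of_lt (measure_mono (Metric.ball_subset_ball (min_le_left _ _))) hfin₀).ne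
  have hbf1 : m B₁ ≠ ∞ :=
    (lt_of_le_of_lt (measure_mono (Metric.ball_subset_ball (min_le_left _ _))) hfin₁).ne
  set μ₀ := unif m B₀ with hμ₀d
  set μ₁ := unif m B₁ with hμ₁d
  haveI : IsProbabilityMeasure μ₀ := unif_prob hb0 hbf0
  haveI : IsProbabilityMeasure μ₁ := unif_prob hb1 hbf1
  have hcd : CDForWith (fun t θ => tauCoef K N t θ) N m μ₀ μ₁ :=
    hCD μ₀ μ₁ (unif_memP2 hb0 hbf0 subset_rfl) (unif_memP2 hb1 hbf1 subset_rfl)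
      (unif_ac Metric.isOpen_ball.measurableSet) (unif_ac Metric.isOpen_ball.measurableSet)
  obtain ⟨μ, q, hμ0, hμ1, hgeo, hact, hcoup, hopt, hineq⟩ := hcd
  have hineq0 := hineq 0 ⟨le_rfl, zero_le_one⟩
  haveI : IsProbabilityMeasure q := hcoup.prob_left
  -- LHS is finite
  have he : (0:ℝ) < 1 - 1/N := by
    rw [sub_pos, div_lt_one (by linarith)]; exact hN
  have hLHS : ∫⁻ x', ((μ 0).rnDeriv m x') ^ (1 - 1/N : ℝ) ∂m < ∞ := by
    rw [hμ0, hμ₀d, unif_lintegral_rpow Metric.isOpen_ball.measurableSet hb0 hbf0 he]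
    refine ENNReal.rpow_lt_top_of_nonneg ?_ hbf0
    have hN0 : (0:ℝ) < N := by linarith
    have h9 : 0 < 1/N := by positivity
    linarith
  -- q-a.e. facts
  have hrnset : MeasurableSet {x' : X | μ₀.rnDeriv m x' = (m B₀)⁻¹} :=
    (Measure.measurable_rnDeriv μ₀ m) (measurableSet_singleton _)
  have hμ₀rn : ∀ᵐ x' ∂μ₀, x' ∈ B₀ ∩ {x' : X | μ₀.rnDeriv m x' = (m B₀)⁻¹} := by
    filter_upwards [unif_ae_mem Metric.isOpen_ball.measurableSet,
      (unif_rnDeriv Metric.isOpen_ball.measurableSet).filter_mono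
        (unif_ac Metric.isOpen_ball.measurableSet).ae_le] with x' hx1 hx2
    exact ⟨hx1, by rw [mem_setOf_eq, hx2, indicator_of_mem hx1]⟩
  have hq_ae0 : ∀ᵐ p ∂q, p.1 ∈ B₀ ∩ {x' : X | μ₀.rnDeriv m x' = (m B₀)⁻¹} :=
    hcoup.ae_fst (Metric.isOpen_ball.measurableSet.inter hrnset) hμ₀rn
  have hq_ae1 : ∀ᵐ p ∂q, p.2 ∈ B₁ :=
    hcoup.ae_snd Metric.isOpen_ball.measurableSet (unif_ae_mem Metric.isOpen_ball.measurableSet)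
  -- RHS is infinite
  have hpow_ne0 : (m B₀)^(1/N : ℝ) ≠ 0 :=
    (ENNReal.rpow_pos (pos_iff_ne_zero.mpr hb0) hbf0).ne'
  have htop : ∀ᵐ p ∂q, (⊤:ℝ≥0∞) ≤
      tauCoef K N (1-0) (dist p.1 p.2) * (μ₀.rnDeriv m p.1)^(-(1/N) : ℝ)
        + tauCoef K N 0 (dist p.1 p.2) * (μ₁.rnDeriv m p.2)^(-(1/N) : ℝ) := by
    filter_upwards [hq_ae0, hq_ae1] with p hp0 hp1
    have hd : L ≤ dist p.1 p.2 := by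
      have h1 : dist p.1 x < ε := lt_of_lt_of_le (Metric.mem_ball.mp hp0.1) (min_le_right _ _)
      have h2 : dist p.2 y < ε := lt_of_lt_of_le (Metric.mem_ball.mp hp1) (min_le_right _ _)
      have h3 := dist_triangle x p.1 y
      have h4 := dist_triangle p.1 p.2 y
      have h5 : dist x p.1 = dist p.1 x := dist_comm _ _
      have h6 : dist p.2 y = dist y p.2 := dist_comm _ _
      have h7 := dist_triangle4 x p.1 p.2 y
      rw [hε] at h1 h2
      linarith [dist_comm x p.1 ▸ h7]
    have htau : tauCoef K N (1-0) (dist p.1 p.2) = ∞ := by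
      rw [show (1:ℝ)-0 = 1 by norm_num]
      exact tau_one_eq_top hK hd
    have hrn : (μ₀.rnDeriv m p.1)^(-(1/N) : ℝ) = (m B₀)^(1/N : ℝ) := by
      have h6 : μ₀.rnDeriv m p.1 = (m B₀)⁻¹ := hp0.2
      rw [h6, ENNReal.inv_rpow, ENNReal.rpow_neg, inv_inv]
    rw [htau, hrn]
    calc (⊤:ℝ≥0∞) = ⊤ * (m B₀)^(1/N : ℝ) := (ENNReal.top_mul hpow_ne0).symm
      _ ≤ _ := le_self_add
  have hRHS : (⊤:ℝ≥0∞) ≤ ∫⁻ p, tauCoef K N (1-0) (dist p.1 p.2) * (μ₀.rnDeriv m p.1)^(-(1/N) : ℝ)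
        + tauCoef K N 0 (dist p.1 p.2) * (μ₁.rnDeriv m p.2)^(-(1/N) : ℝ) ∂q := by
    have h8 : (⊤:ℝ≥0∞) = ∫⁻ _, (⊤:ℝ≥0∞) ∂q := by
      rw [lintegral_const, measure_univ, mul_one]
    rw [h8]
    exact lintegral_mono_ae htop
  have : (⊤:ℝ≥0∞) ≤ ∫⁻ x', ((μ 0).rnDeriv m x') ^ (1 - 1/N : ℝ) ∂m := le_trans hRHS hineq0
  exact absurd (top_le_iff.mp this) hLHS.ne

end Diameter
section Growth
set_option linter.unusedSectionVars false
set_option maxHeartbeats 1000000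

variable {X : Type*} [MetricSpace X] [CompleteSpace X] [TopologicalSpace.SeparableSpace X]
  [MeasurableSpace X] [BorelSpace X]

lemma growth [Nonempty X] (m : Measure X) [SigmaFinite m] {K N : ℝ} (hK : 0 < K) (hN : 1 < N)
    (hCD : CD K N m) (hsupp : mmSupp m = Set.univ)
    {y : X} {δ : ℝ} (hδ : 0 < δ) (hfin : m (Metric.ball y δ) < ∞) (r : ℝ) :
    m (Metric.ball y r) ≤ ((2:ℝ≥0∞)^N + 1) * m (Metric.ball y (r/2 + 3*δ)) := by
  rcases le_or_gt r 0 with hr | hr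
  · rw [Metric.ball_eq_empty.2 hr]
    simp
  have hb0 := ball_pos_of_supp hsupp y hδ
  set D := Metric.ball y r \ Metric.ball y δ with hD
  have hDm : MeasurableSet D := measurableSet_ball.diff measurableSet_ball
  have hcover : m (Metric.ball y r) ≤ m (Metric.ball y δ) + m D := by
    refine le_trans (measure_mono ?_) (measure_union_le _ _)
    intro z hz
    by_cases hzb : z ∈ Metric.ball y δ
    · exact Or.inl hzb
    · exact Or.inr ⟨hz, hzb⟩
  have hDsup : m D = ⨆ n, m (D ∩ spanningSets m n) := by
    conv_lhs => rw [show D = ⋃ n, D ∩ spanningSets m n by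
      rw [← inter_iUnion, iUnion_spanningSets, inter_univ]]
    exact Directed.measure_iUnion
      (Monotone.directed_le fun i j hij => inter_subset_inter_right D
        (monotone_spanningSets m hij))
  have hstep : ∀ n, m (D ∩ spanningSets m n)
      ≤ 2^N * m (Metric.closedBall y (r/2 + 2*δ)) := by
    intro n
    by_cases h0 : m (D ∩ spanningSets m n) = 0
    · rw [h0]; exact zero_le
    refine keyDoubling m hK hN hCD hb0 hfin.ne
      (hDm.inter (measurableSet_spanningSets m n))
      ((inter_subset_left).trans diff_subset)
      (Set.disjoint_of_subset_left ((inter_subset_left).trans_eq rfl) ?_) h0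
      ((measure_mono inter_subset_right).trans_lt (measure_spanningSets_lt_top m n)).ne
    exact disjoint_sdiff_left
  have hDle : m D ≤ 2^N * m (Metric.closedBall y (r/2 + 2*δ)) := by
    rw [hDsup]; exact iSup_le hstep
  have hsub1 : Metric.closedBall y (r/2 + 2*δ) ⊆ Metric.ball y (r/2 + 3*δ) :=
    Metric.closedBall_subset_ball (by linarith)
  have hsub2 : Metric.ball y δ ⊆ Metric.ball y (r/2 + 3*δ) :=
    Metric.ball_subset_ball (by linarith)
  calc m (Metric.ball y r) ≤ m (Metric.ball y δ) + m D := hcover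
    _ ≤ m (Metric.ball y (r/2 + 3*δ)) + 2^N * m (Metric.ball y (r/2 + 3*δ)) :=
        add_le_add (measure_mono hsub2)
          (hDle.trans (mul_le_mul_right (measure_mono hsub1) _))
    _ = ((2:ℝ≥0∞)^N + 1) * m (Metric.ball y (r/2 + 3*δ)) := by
        rw [add_mul, one_mul, add_comm]

lemma growth_iter [Nonempty X] (m : Measure X) [SigmaFinite m] {K N : ℝ} (hK : 0 < K)
    (hN : 1 < N) (hCD : CD K N m) (hsupp : mmSupp m = Set.univ)
    {y : X} {δ : ℝ} (hδ : 0 < δ) (hfin : m (Metric.ball y δ) < ∞) (k : ℕ) (r : ℝ) :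
    m (Metric.ball y r) ≤ ((2:ℝ≥0∞)^N + 1)^k * m (Metric.ball y (r/2^k + 6*δ)) := by
  induction k generalizing r with
  | zero =>
      simpa using measure_mono (Metric.ball_subset_ball (by linarith : r ≤ r/2^0 + 6*δ))
  | succ k ih =>
      calc m (Metric.ball y r) ≤ ((2:ℝ≥0∞)^N + 1)^k * m (Metric.ball y (r/2^k + 6*δ)) := ih r
        _ ≤ ((2:ℝ≥0∞)^N + 1)^k * (((2:ℝ≥0∞)^N + 1)
            * m (Metric.ball y ((r/2^k + 6*δ)/2 + 3*δ))) :=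
          mul_le_mul_right (growth m hK hN hCD hsupp hδ hfin _) _
        _ = ((2:ℝ≥0∞)^N + 1)^(k+1) * m (Metric.ball y (r/2^(k+1) + 6*δ)) := by
            rw [← mul_assoc, ← pow_succ]
            congr 2
            rw [pow_succ]
            ring

end Growth
section Sep
set_option linter.unusedSectionVars false

variable {X : Type*} [MetricSpace X]

lemma exists_separated (h : ¬ TotallyBounded (Set.univ : Set X)) :
    ∃ ε : ℝ, 0 < ε ∧ ∃ u : ℕ → X, ∀ i j, i < j → ε ≤ dist (u i) (u j) := by
  rw [Metric.totallyBounded_iff] at h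
  push_neg at h
  obtain ⟨ε, hε, h⟩ := h
  have H : ∀ t : Finset X, ∃ x : X, ∀ y' ∈ t, ε ≤ dist x y' := by
    intro t
    have h2 := h t t.finite_toSet
    obtain ⟨x, -, hx⟩ := not_subset.mp h2
    refine ⟨x, fun y' hy' => ?_⟩
    by_contra hlt
    push_neg at hlt
    exact hx (Set.mem_biUnion (Finset.mem_coe.mpr hy') (Metric.mem_ball.mpr hlt))
  choose f hf using H
  let g : ℕ → Finset X := fun n => Nat.rec ∅ (fun _ s => insert (f s) s) n
  have hg : ∀ n, g (n+1) = insert (f (g n)) (g n) := fun n => rfl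
  have hmono : ∀ i j, i ≤ j → g i ⊆ g j := by
    intro i j hij
    induction j with
    | zero =>
        rw [Nat.le_zero.mp hij]
    | succ j ih =>
        rcases Nat.eq_or_lt_of_le hij with h' | h'
        · rw [h']
        · exact (ih (Nat.lt_succ_iff.mp h')).trans (by rw [hg]; exact Finset.subset_insert _ _)
  refine ⟨ε, hε, fun n => f (g n), fun i j hij => ?_⟩
  have h1 : f (g i) ∈ g j := by
    have h2 : f (g i) ∈ g (i+1) := by rw [hg]; exact Finset.mem_insert_self _ _
    exact hmono (i+1) j hij h2
  have h3 := hf (g j) (f (g i)) h1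
  rwa [dist_comm] at h3

end Sep
set_option maxHeartbeats 1000000 in
/-- **Bonnet–Myers diameter bound.** A CD(K,N) space with `K > 0` and finite `N` is
compact with diameter at most `π √((N-1)/K)`. -/
theorem bonnet_myers
    {X : Type*} [MetricSpace X] [CompleteSpace X] [TopologicalSpace.SeparableSpace X]
    [MeasurableSpace X] [BorelSpace X] (m : Measure X) [IsLocallyFiniteMeasure m]
    (hsupp : mmSupp m = Set.univ) (K N : ℝ) (hK : 0 < K) (hN : 1 < N)
    (hCD : CD K N m) :
    CompactSpace X ∧
    Metric.diam (Set.univ : Set X) ≤ Real.pi * Real.sqrt ((N - 1) / K) := by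
  haveI : SecondCountableTopology X := UniformSpace.secondCountable_of_separable X
  haveI : SigmaFinite m := inferInstance
  have hLnn : 0 ≤ Real.pi * Real.sqrt ((N - 1) / K) := by positivity
  rcases isEmpty_or_nonempty X with hempty | hne
  · refine ⟨inferInstance, ?_⟩
    have huniv : (Set.univ : Set X) = ∅ := by
      simp [Set.eq_empty_of_isEmpty]
    rw [huniv, Metric.diam_empty]
    exact hLnn
  · set L := Real.pi * Real.sqrt ((N-1)/K) with hLd
    have hdist : ∀ x y : X, dist x y ≤ L := dist_le_of_CD m hsupp hK hN hCD
    refine ⟨?_, Metric.diam_le_of_forall_dist_le hLnn (fun x _ y _ => hdist x y)⟩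
    rw [← isCompact_univ_iff, isCompact_iff_totallyBounded_isComplete]
    refine ⟨?_, completeSpace_iff_isComplete_univ.mp inferInstance⟩
    by_contra hTB
    obtain ⟨ε, hε, u, hu⟩ := exists_separated hTB
    set C := (2:ℝ≥0∞)^N + 1 with hC
    have hNnn : (0:ℝ) ≤ N := by linarith
    have hC0 : C ≠ 0 := by
      rw [hC]
      exact (lt_of_lt_of_le zero_lt_one le_add_self).ne'
    have hCt : C ≠ ∞ := by
      rw [hC]
      exact ENNReal.add_ne_top.2 ⟨(ENNReal.rpow_lt_top_of_nonneg hNnn (by norm_num)).ne,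
        ENNReal.one_ne_top⟩
    have hball_univ : ∀ z : X, (Set.univ : Set X) ⊆ Metric.ball z (L+1) := by
      intro z w _
      rw [Metric.mem_ball]
      exact lt_of_le_of_lt (hdist w z) (by linarith)
    have hpow : ∀ d : ℝ, 0 < d → ∃ k : ℕ, (L+1)/2^k < d := by
      intro d hd
      obtain ⟨k, hk⟩ := pow_unbounded_of_one_lt ((L+1)/d) (by norm_num : (1:ℝ) < 2)
      refine ⟨k, ?_⟩
      rw [div_lt_iff₀ (by positivity)] at hk ⊢
      calc L + 1 < 2^k * d := by linarith [hk]
        _ = d * 2^k := mul_comm _ _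
    have huniv_fin : m Set.univ < ∞ := by
      set z := Classical.arbitrary X with hz
      obtain ⟨ρ, hρ, hfin⟩ := exists_small_ball_fin m z
      set δ := ρ/7 with hδd
      have hδpos : 0 < δ := by positivity
      have hfinδ : m (Metric.ball z δ) < ∞ :=
        (measure_mono (Metric.ball_subset_ball (by linarith))).trans_lt hfin
      obtain ⟨k, hk⟩ := hpow δ hδpos
      calc m Set.univ ≤ m (Metric.ball z (L+1)) := measure_mono (hball_univ z)
        _ ≤ C^k * m (Metric.ball z ((L+1)/2^k + 6*δ)) :=
            growth_iter m hK hN hCD hsupp hδpos hfinδ k (L+1)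
        _ ≤ C^k * m (Metric.ball z ρ) := by
            refine mul_le_mul_right (measure_mono (Metric.ball_subset_ball ?_)) _
            rw [hδd] at hk ⊢
            linarith
        _ < ∞ := ENNReal.mul_lt_top (ENNReal.pow_lt_top hCt.lt_top) hfin
    have huniv_ne : m Set.univ ≠ 0 := by
      intro h0
      exact ball_pos_of_supp hsupp (Classical.arbitrary X) one_pos
        (measure_mono_null (subset_univ _) h0)
    set δ' := ε/28 with hδ'
    have hδ'pos : 0 < δ' := by positivity
    obtain ⟨k, hk⟩ := hpow δ' hδ'pos
    have hlower : ∀ n, m Set.univ ≤ C^k * m (Metric.ball (u n) (ε/4)) := by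
      intro n
      have hfinδ' : m (Metric.ball (u n) δ') < ∞ :=
        (measure_mono (subset_univ _)).trans_lt huniv_fin
      calc m Set.univ ≤ m (Metric.ball (u n) (L+1)) := measure_mono (hball_univ (u n))
        _ ≤ C^k * m (Metric.ball (u n) ((L+1)/2^k + 6*δ')) :=
            growth_iter m hK hN hCD hsupp hδ'pos hfinδ' k (L+1)
        _ ≤ C^k * m (Metric.ball (u n) (ε/4)) := by
            refine mul_le_mul_right (measure_mono (Metric.ball_subset_ball ?_)) _
            rw [hδ'] at hk ⊢
            linarith
    have hCk0 : C^k ≠ 0 := pow_ne_zero k hC0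
    have hCkt : C^k ≠ ∞ := ENNReal.pow_ne_top hCt
    set β := m Set.univ / C^k with hβ
    have hβle : ∀ n, β ≤ m (Metric.ball (u n) (ε/4)) := by
      intro n
      rw [hβ]
      exact (ENNReal.div_le_iff_le_mul (Or.inl hCk0) (Or.inl hCkt)).2
        ((hlower n).trans_eq (mul_comm _ _))
    have hβ0 : β ≠ 0 := by
      rw [hβ]
      simp only [ne_eq, ENNReal.div_eq_zero_iff]
      push_neg
      exact ⟨huniv_ne, hCkt⟩
    have hβt : β ≠ ∞ := by
      rw [hβ]
      exact (ENNReal.div_lt_top huniv_fin.ne hCk0).ne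
    have hdisjballs : ∀ M : ℕ, Set.PairwiseDisjoint (↑(Finset.range M) : Set ℕ)
        (fun i => Metric.ball (u i) (ε/4)) := by
      intro M i _ j _ hij
      have hd : ε ≤ dist (u i) (u j) := by
        rcases lt_or_gt_of_ne hij with h' | h'
        · exact hu i j h'
        · rw [dist_comm]; exact hu j i h'
      refine Set.disjoint_left.mpr fun z hzi hzj => ?_
      simp only [Metric.mem_ball] at hzi hzj
      have h2 := dist_triangle (u i) z (u j)
      have h3 : dist (u i) z = dist z (u i) := dist_comm _ _
      linarith
    have hsum : ∀ M : ℕ, (M : ℝ≥0∞) * β ≤ m Set.univ := by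
      intro M
      have hmeq : ∑ i ∈ Finset.range M, m (Metric.ball (u i) (ε/4))
          = m (⋃ i ∈ Finset.range M, Metric.ball (u i) (ε/4)) :=
        (measure_biUnion_finset (hdisjballs M) (fun i _ => measurableSet_ball)).symm
      calc (M : ℝ≥0∞) * β = ∑ _i ∈ Finset.range M, β := by
            rw [Finset.sum_const, Finset.card_range, nsmul_eq_mul]
        _ ≤ ∑ i ∈ Finset.range M, m (Metric.ball (u i) (ε/4)) :=
            Finset.sum_le_sum fun i _ => hβle i
        _ = m (⋃ i ∈ Finset.range M, Metric.ball (u i) (ε/4)) := hmeq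
        _ ≤ m Set.univ := measure_mono (subset_univ _)
    have hβr : 0 < β.toReal := ENNReal.toReal_pos hβ0 hβt
    obtain ⟨M, hM⟩ := exists_nat_gt ((m Set.univ).toReal / β.toReal)
    have h1 : ((M : ℝ≥0∞) * β).toReal ≤ (m Set.univ).toReal :=
      ENNReal.toReal_mono huniv_fin.ne (hsum M)
    rw [ENNReal.toReal_mul, ENNReal.toReal_natCast] at h1
    rw [div_lt_iff₀ hβr] at hM
    linarith

end
end

section
/- Let (X,d,m) be an mm-space with m(X) = 1 satisfying CD(K,∞) for some K > 0. Then m ∈ P₂(X) and for every μ ∈ P₂(X): W₂(μ, m)² ≤ (2/K)·Ent(μ|m) (Talagrand inequality). -/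
open MeasureTheory Filter Set Topology ENNReal
open scoped Classical

noncomputable section

section TalagrandAux

set_option linter.unusedSectionVars false

open Metric

variable {Y : Type*} [MetricSpace Y] [MeasurableSpace Y]

lemma tala_mul_log_ge {a : ℝ} (ha : 0 ≤ a) : a - 1 ≤ a * Real.log a := by
  rcases eq_or_lt_of_le ha with h | h
  · simp [← h]
  · have h1 : Real.log a⁻¹ ≤ a⁻¹ - 1 := Real.log_le_sub_one_of_pos (by positivity)
    rw [Real.log_inv] at h1
    have h2 : a * (1 - a⁻¹) ≤ a * Real.log a :=
      mul_le_mul_of_nonneg_left (by linarith) ha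
    have h3 : a * (1 - a⁻¹) = a - 1 := by field_simp
    linarith

lemma tala_entFun_ge (μ m : Measure Y) (x : Y) :
    (μ.rnDeriv m x).toReal - 1 ≤ entFun μ m x :=
  tala_mul_log_ge ENNReal.toReal_nonneg

lemma tala_entFun_ge_neg_one (μ m : Measure Y) (x : Y) : -1 ≤ entFun μ m x := by
  have h1 := tala_entFun_ge μ m x
  have h2 : (0:ℝ) ≤ (μ.rnDeriv m x).toReal := ENNReal.toReal_nonneg
  linarith

lemma tala_measurable_entFun (μ m : Measure Y) : Measurable (entFun μ m) := by
  have h : Measurable fun x => (μ.rnDeriv m x).toReal :=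
    (Measure.measurable_rnDeriv μ m).ennreal_toReal
  exact h.mul (Real.measurable_log.comp h)

lemma tala_ofReal_max (a : ℝ) : ENNReal.ofReal (max a 0) = ENNReal.ofReal a := by
  rcases le_total a 0 with h | h
  · simp [max_eq_right h, ENNReal.ofReal_of_nonpos h]
  · simp [max_eq_left h]

lemma tala_coe_ennreal (x : ℝ≥0∞) (hx : x ≠ ⊤) : (x : EReal) = ((x.toReal : ℝ) : EReal) := by
  conv_lhs => rw [← ENNReal.ofReal_toReal hx]
  rw [EReal.coe_ennreal_ofReal, max_eq_left ENNReal.toReal_nonneg]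

lemma tala_N_ne_top (μ m : Measure Y) [IsFiniteMeasure m] :
    ∫⁻ x, ENNReal.ofReal (-(entFun μ m x)) ∂m ≠ ⊤ := by
  have hle : ∫⁻ x, ENNReal.ofReal (-(entFun μ m x)) ∂m ≤ m Set.univ := by
    calc ∫⁻ x, ENNReal.ofReal (-(entFun μ m x)) ∂m ≤ ∫⁻ _, 1 ∂m := by
          refine lintegral_mono fun x => ?_
          have h := tala_entFun_ge_neg_one μ m x
          calc ENNReal.ofReal (-(entFun μ m x)) ≤ ENNReal.ofReal 1 :=
                ENNReal.ofReal_le_ofReal (by linarith)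
            _ = 1 := ENNReal.ofReal_one
      _ = m Set.univ := lintegral_one
  exact (lt_of_le_of_lt hle (measure_lt_top m _)).ne

lemma tala_ent_eq (μ m : Measure Y) [IsFiniteMeasure m]
    (hac : μ ≪ m) (hint : Integrable (fun x => max (entFun μ m x) 0) m) :
    Integrable (entFun μ m) m ∧ Ent μ m = ((∫ x, entFun μ m x ∂m : ℝ) : EReal) := by
  set f := entFun μ m with hf
  have hfm : Measurable f := tala_measurable_entFun μ m
  have hnegint : Integrable (fun x => max (-(f x)) 0) m := by
    refine Integrable.mono' (integrable_const (1:ℝ))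
      ((hfm.neg.max measurable_const).aestronglyMeasurable) ?_
    refine Filter.Eventually.of_forall fun x => ?_
    rw [Real.norm_eq_abs, abs_of_nonneg (le_max_right _ _)]
    have h := tala_entFun_ge_neg_one μ m x
    rw [max_le_iff]
    constructor <;> [linarith; norm_num]
  have hsub : (fun x => max (f x) 0 - max (-(f x)) 0) = f := by
    funext x; exact max_zero_sub_eq_self (f x)
  have hfint : Integrable f m := by
    refine (hint.sub hnegint).congr (Filter.Eventually.of_forall fun x => ?_)
    simp only [Pi.sub_apply]
    exact max_zero_sub_eq_self (f x)
  have hNtoReal : (∫⁻ x, ENNReal.ofReal (-(f x)) ∂m).toReal = ∫ x, max (-(f x)) 0 ∂m := by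
    have h := integral_eq_lintegral_of_nonneg_ae (μ := m)
      (f := fun x => max (-(f x)) 0)
      (Filter.Eventually.of_forall fun x => le_max_right _ _)
      (hfm.neg.max measurable_const).aestronglyMeasurable
    rw [h]
    congr 1
    exact lintegral_congr fun x => (tala_ofReal_max _).symm
  refine ⟨hfint, ?_⟩
  rw [Ent, if_pos ⟨hac, hint⟩, tala_coe_ennreal _ (tala_N_ne_top μ m), hNtoReal,
    ← EReal.coe_sub]
  rw [show ∫ x, max (entFun μ m x) 0 ∂m = ∫ x, max (f x) 0 ∂m from rfl]
  rw [← integral_sub hint hnegint]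
  norm_cast
  exact integral_congr_ae (Filter.Eventually.of_forall fun x => congrFun hsub x)

lemma tala_ent_ne_bot (μ m : Measure Y) [IsFiniteMeasure m] : Ent μ m ≠ ⊥ := by
  rw [Ent]
  split_ifs with h
  · rw [tala_coe_ennreal _ (tala_N_ne_top μ m), ← EReal.coe_sub]
    exact EReal.coe_ne_bot _
  · simp

lemma tala_ent_nonneg (μ m : Measure Y) [IsProbabilityMeasure μ] [IsProbabilityMeasure m]
    (hac : μ ≪ m) (hint : Integrable (fun x => max (entFun μ m x) 0) m) :
    (0:EReal) ≤ Ent μ m := by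
  obtain ⟨hfint, hval⟩ := tala_ent_eq μ m hac hint
  rw [hval]
  have hint2 : Integrable (fun x => (μ.rnDeriv m x).toReal - 1) m :=
    Measure.integrable_toReal_rnDeriv.sub (integrable_const 1)
  have h1 : ∫ x, ((μ.rnDeriv m x).toReal - 1) ∂m ≤ ∫ x, entFun μ m x ∂m :=
    integral_mono hint2 hfint (fun x => tala_entFun_ge μ m x)
  rw [integral_sub Measure.integrable_toReal_rnDeriv (integrable_const 1),
    Measure.integral_toReal_rnDeriv hac] at h1
  simp only [measureReal_def, measure_univ, ENNReal.toReal_one, integral_const, smul_eq_mul, mul_one] at h1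
  have h0 : (0:ℝ) ≤ ∫ x, entFun μ m x ∂m := by linarith
  exact_mod_cast h0

lemma tala_ent_self (m : Measure Y) [IsProbabilityMeasure m] : Ent m m = (0:EReal) := by
  have hae : entFun m m =ᵐ[m] 0 := by
    filter_upwards [Measure.rnDeriv_self m] with x hx
    simp [entFun, hx]
  have hint : Integrable (fun x => max (entFun m m x) 0) m := by
    refine (integrable_congr ?_).mpr (integrable_const (0:ℝ))
    filter_upwards [hae] with x hx
    simp [hx]
  obtain ⟨_, hval⟩ := tala_ent_eq m m Measure.AbsolutelyContinuous.rfl hint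
  rw [hval, integral_congr_ae hae]
  simp

lemma tala_isProb_restrict (m : Measure Y) [IsFiniteMeasure m] {A : Set Y} (h0 : 0 < m A) :
    IsProbabilityMeasure ((m A)⁻¹ • m.restrict A) := by
  constructor
  rw [Measure.smul_apply, Measure.restrict_apply MeasurableSet.univ, Set.univ_inter, smul_eq_mul,
    ENNReal.inv_mul_cancel h0.ne' (measure_ne_top m A)]

lemma tala_restrict_ac (m : Measure Y) (A : Set Y) (c : ℝ≥0∞) (hc : c ≠ ⊤) :
    (c • m.restrict A) ≪ m := by
  intro s hs
  rw [Measure.smul_apply, smul_eq_mul]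
  have h1 : m.restrict A s ≤ m s := Measure.restrict_le_self s
  rw [hs] at h1
  rw [le_zero_iff.mp h1, mul_zero]

lemma tala_rnDeriv_restrict (m : Measure Y) [IsFiniteMeasure m] {A : Set Y}
    (hA : MeasurableSet A) (h0 : 0 < m A) :
    ((m A)⁻¹ • m.restrict A).rnDeriv m =ᵐ[m] fun x => A.indicator (fun _ => (m A)⁻¹) x := by
  have h1 := Measure.rnDeriv_smul_left_of_ne_top (m.restrict A) m
    (r := (m A)⁻¹) (by simp [h0.ne'])
  have h2 := Measure.rnDeriv_restrict_self m hA
  filter_upwards [h1, h2] with x hx1 hx2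
  rw [hx1]
  simp only [Pi.smul_apply, hx2, smul_eq_mul]
  by_cases hxA : x ∈ A <;> simp [Set.indicator, hxA]

lemma tala_ent_restrict (m : Measure Y) [IsProbabilityMeasure m] {A : Set Y}
    (hA : MeasurableSet A) (h0 : 0 < m A) :
    Ent ((m A)⁻¹ • m.restrict A) m = ((- Real.log (m A).toReal : ℝ) : EReal) := by
  set c : ℝ := ((m A).toReal)⁻¹ with hc
  have hb : 0 < (m A).toReal := ENNReal.toReal_pos h0.ne' (measure_ne_top m A)
  have hder := tala_rnDeriv_restrict m hA h0
  have hfae : entFun ((m A)⁻¹ • m.restrict A) m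
      =ᵐ[m] fun x => A.indicator (fun _ => c * Real.log c) x := by
    filter_upwards [hder] with x hx
    rw [entFun, hx]
    by_cases hxA : x ∈ A <;> simp [Set.indicator, hxA, ENNReal.toReal_inv, hc]
  have hint : Integrable (fun x => max (entFun ((m A)⁻¹ • m.restrict A) m x) 0) m := by
    have h3 : Integrable (fun x => A.indicator (fun _ => max (c * Real.log c) 0) x) m :=
      (integrable_const _).indicator hA
    refine (integrable_congr ?_).mpr h3
    filter_upwards [hfae] with x hx
    rw [hx]
    by_cases hxA : x ∈ A <;> simp [Set.indicator, hxA]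
  obtain ⟨_, hval⟩ := tala_ent_eq _ m
    (tala_restrict_ac m A _ (by simp [h0.ne'])) hint
  rw [hval, integral_congr_ae hfae, integral_indicator_const _ hA]
  have hfin : c * Real.log c * (m A).toReal = - Real.log (m A).toReal := by
    rw [hc, Real.log_inv]
    field_simp
  rw [smul_eq_mul, mul_comm]
  exact_mod_cast congrArg (fun r : ℝ => (r : EReal)) hfin

lemma tala_memP2_restrict (m : Measure Y) [IsProbabilityMeasure m] {A : Set Y}
    (hA : MeasurableSet A) (h0 : 0 < m A) {x₀ : Y} {R : ℝ}
    (hsub : A ⊆ Metric.closedBall x₀ R) :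
    MemP2 ((m A)⁻¹ • m.restrict A) := by
  refine ⟨tala_isProb_restrict m h0, x₀, ?_⟩
  rw [lintegral_smul_measure]
  have hle : ∫⁻ x, edist x x₀ ^ 2 ∂(m.restrict A) ≤ ENNReal.ofReal R ^ 2 * m A := by
    have h1 : ∫⁻ x in A, edist x x₀ ^ 2 ∂m ≤ ∫⁻ _ in A, ENNReal.ofReal R ^ 2 ∂m := by
      refine setLIntegral_mono measurable_const fun x hx => ?_
      have h2 : dist x x₀ ≤ R := hsub hx
      rw [edist_dist]
      exact pow_le_pow_left' (ENNReal.ofReal_le_ofReal h2) 2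
    rw [setLIntegral_const] at h1
    exact h1
  calc (m A)⁻¹ • ∫⁻ x, edist x x₀ ^ 2 ∂(m.restrict A)
      ≤ (m A)⁻¹ * (ENNReal.ofReal R ^ 2 * m A) := by
        rw [smul_eq_mul]; exact mul_le_mul_right hle _
    _ < ⊤ := by
        refine ENNReal.mul_lt_top (ENNReal.inv_lt_top.mpr h0)
          (ENNReal.mul_lt_top (ENNReal.pow_lt_top ENNReal.ofReal_lt_top)
            (measure_lt_top m A))

lemma tala_edist_sq_le (x y z : Y) : edist x z ^ 2 ≤ 4 * (edist x y ^ 2 + edist y z ^ 2) := by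
  have h1 : edist x z ≤ edist x y + edist y z := edist_triangle x y z
  have h2 : edist x y + edist y z ≤ 2 * max (edist x y) (edist y z) := by
    rcases le_total (edist x y) (edist y z) with h | h
    · rw [max_eq_right h, two_mul]; exact add_le_add_left h _
    · rw [max_eq_left h, two_mul]; exact add_le_add_right h _
  calc edist x z ^ 2 ≤ (2 * max (edist x y) (edist y z)) ^ 2 :=
        pow_le_pow_left' (h1.trans h2) 2
    _ = 4 * max (edist x y) (edist y z) ^ 2 := by rw [mul_pow]; norm_num
    _ ≤ 4 * (edist x y ^ 2 + edist y z ^ 2) := by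
        refine mul_le_mul_right ?_ 4
        rcases le_total (edist x y) (edist y z) with h | h
        · rw [max_eq_right h]; exact le_add_self
        · rw [max_eq_left h]; exact le_self_add

lemma tala_moment [BorelSpace Y] {μ : Measure Y} (h : MemP2 μ) (y₀ : Y) :
    ∫⁻ x, edist x y₀ ^ 2 ∂μ < ⊤ := by
  obtain ⟨hp, x₀, hx₀⟩ := h
  have hmeas : Measurable fun x : Y => edist x x₀ ^ 2 :=
    ((continuous_id.edist continuous_const).measurable).pow_const 2
  calc ∫⁻ x, edist x y₀ ^ 2 ∂μ ≤ ∫⁻ x, 4 * (edist x x₀ ^ 2 + edist x₀ y₀ ^ 2) ∂μ :=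
        lintegral_mono fun x => tala_edist_sq_le x x₀ y₀
    _ = 4 * ((∫⁻ x, edist x x₀ ^ 2 ∂μ) + edist x₀ y₀ ^ 2 * μ Set.univ) := by
        rw [lintegral_const_mul (f := fun x => edist x x₀ ^ 2 + edist x₀ y₀ ^ 2) 4
            (hmeas.add measurable_const),
          lintegral_add_right _ measurable_const, lintegral_const]
    _ < ⊤ := by
        haveI := hp
        refine ENNReal.mul_lt_top (by norm_num) (ENNReal.add_lt_top.mpr ⟨hx₀, ?_⟩)
        exact ENNReal.mul_lt_top (ENNReal.pow_lt_top (edist_lt_top x₀ y₀))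
          (measure_lt_top μ _)

lemma tala_lintegral_fst {q : Measure (Y × Y)} {μ ν : Measure Y} (hq : IsCoupling q μ ν)
    {f : Y → ℝ≥0∞} (hf : Measurable f) : ∫⁻ p, f p.1 ∂q = ∫⁻ x, f x ∂μ := by
  rw [← hq.1, lintegral_map hf measurable_fst]

lemma tala_lintegral_snd {q : Measure (Y × Y)} {μ ν : Measure Y} (hq : IsCoupling q μ ν)
    {f : Y → ℝ≥0∞} (hf : Measurable f) : ∫⁻ p, f p.2 ∂q = ∫⁻ x, f x ∂ν := by
  rw [← hq.2, lintegral_map hf measurable_snd]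

lemma tala_coupling_mass {q : Measure (Y × Y)} {μ ν : Measure Y} (hq : IsCoupling q μ ν) :
    q Set.univ = μ Set.univ ∧ ν Set.univ = μ Set.univ := by
  have h1 : q Set.univ = μ Set.univ := by
    rw [← hq.1, Measure.map_apply measurable_fst MeasurableSet.univ, Set.preimage_univ]
  have h2 : ν Set.univ = q Set.univ := by
    rw [← hq.2, Measure.map_apply measurable_snd MeasurableSet.univ, Set.preimage_univ]
  exact ⟨h1, h2.trans h1⟩

lemma tala_wsq_lt_top [SecondCountableTopology Y] [BorelSpace Y] {μ ν : Measure Y}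
    (hμ : MemP2 μ) (hν : MemP2 ν) : Wsq μ ν < ⊤ := by
  haveI := hμ.1
  haveI := hν.1
  obtain ⟨x₀, hx₀⟩ := hμ.2
  have hcoup : IsCoupling (μ.prod ν) μ ν := by
    constructor <;> simp [measure_univ]
  have hle : Wsq μ ν ≤ ∫⁻ p, edist p.1 p.2 ^ 2 ∂(μ.prod ν) := by
    rw [Wsq]; exact iInf_le_of_le _ (iInf_le _ hcoup)
  refine lt_of_le_of_lt hle ?_
  have hm1 : Measurable fun p : Y × Y => edist p.1 x₀ ^ 2 :=
    ((continuous_fst.edist continuous_const).measurable).pow_const 2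
  have hm2 : Measurable fun p : Y × Y => edist x₀ p.2 ^ 2 :=
    ((continuous_const.edist continuous_snd).measurable).pow_const 2
  calc ∫⁻ p, edist p.1 p.2 ^ 2 ∂(μ.prod ν)
      ≤ ∫⁻ p, 4 * (edist p.1 x₀ ^ 2 + edist x₀ p.2 ^ 2) ∂(μ.prod ν) :=
        lintegral_mono fun p => tala_edist_sq_le p.1 x₀ p.2
    _ = 4 * ((∫⁻ p, edist p.1 x₀ ^ 2 ∂(μ.prod ν)) + ∫⁻ p, edist x₀ p.2 ^ 2 ∂(μ.prod ν)) := by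
        rw [lintegral_const_mul (f := fun p : Y × Y => edist p.1 x₀ ^ 2 + edist x₀ p.2 ^ 2) 4
            (hm1.add hm2), lintegral_add_left hm1]
    _ = 4 * ((∫⁻ x, edist x x₀ ^ 2 ∂μ) + ∫⁻ y, edist x₀ y ^ 2 ∂ν) := by
        rw [tala_lintegral_fst hcoup (f := fun x => edist x x₀ ^ 2) (by fun_prop),
          tala_lintegral_snd hcoup (f := fun y => edist x₀ y ^ 2) (by fun_prop)]
    _ < ⊤ := by
        refine ENNReal.mul_lt_top (by norm_num) (ENNReal.add_lt_top.mpr ⟨?_, ?_⟩)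
        · exact tala_moment hμ x₀
        · have h5 : ∫⁻ y, edist x₀ y ^ 2 ∂ν = ∫⁻ y, edist y x₀ ^ 2 ∂ν := by
            simp_rw [edist_comm x₀]
          rw [h5]
          exact tala_moment hν x₀
lemma tala_exists_coupling {μ ν : Measure Y} (h : Wsq μ ν ≠ ⊤) :
    ∃ q : Measure (Y × Y), IsCoupling q μ ν := by
  by_contra hc
  push_neg at hc
  refine h ?_
  rw [Wsq, iInf_eq_top]
  intro q
  rw [iInf_eq_top]
  intro hq
  exact absurd hq (hc q)

lemma tala_geodesic_prob {μ : ℝ → Measure Y} (hgeo : IsW2Geodesic μ)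
    (h0 : IsProbabilityMeasure (μ 0)) (hfin : Wsq (μ 0) (μ 1) ≠ ⊤)
    {t : ℝ} (ht : t ∈ Icc (0:ℝ) 1) : IsProbabilityMeasure (μ t) := by
  have h := hgeo 0 ⟨le_refl 0, zero_le_one⟩ t ht
  have hW1 : W2 (μ 0) (μ 1) ≠ ⊤ := by
    rw [W2]
    exact (ENNReal.rpow_lt_top_of_nonneg (by norm_num) hfin).ne
  have h2 : W2 (μ 0) (μ t) ≠ ⊤ := by
    rw [h]
    exact (ENNReal.mul_lt_top ENNReal.ofReal_lt_top hW1.lt_top).ne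
  have h3 : Wsq (μ 0) (μ t) ≠ ⊤ := by
    intro hc
    rw [W2, hc, ENNReal.top_rpow_of_pos (by norm_num)] at h2
    exact h2 rfl
  obtain ⟨q, hq⟩ := tala_exists_coupling h3
  obtain ⟨_, h5⟩ := tala_coupling_mass hq
  constructor
  rw [h5]
  exact measure_univ

lemma tala_wsq_ge [SecondCountableTopology Y] [BorelSpace Y] {μ ν : Measure Y}
    [IsProbabilityMeasure μ] {A B : Set Y} (hA : MeasurableSet A) (hB : MeasurableSet B)
    (hμA : μ Aᶜ = 0) (hνB : ν Bᶜ = 0) {r : ℝ}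
    (hd : ∀ a ∈ A, ∀ b ∈ B, r ≤ dist a b) :
    ENNReal.ofReal r ^ 2 ≤ Wsq μ ν := by
  rw [Wsq]
  refine le_iInf fun q => le_iInf fun hq => ?_
  have hq1 : q (Prod.fst ⁻¹' Aᶜ) = 0 := by
    rw [← Measure.map_apply measurable_fst hA.compl, hq.1, hμA]
  have hq2 : q (Prod.snd ⁻¹' Bᶜ) = 0 := by
    rw [← Measure.map_apply measurable_snd hB.compl, hq.2, hνB]
  have hcompl : q ((A ×ˢ B)ᶜ) = 0 := by
    refine measure_mono_null (fun p hp => ?_) (measure_union_null hq1 hq2)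
    by_cases h1 : p.1 ∈ A
    · right
      intro h2
      exact hp ⟨h1, h2⟩
    · left
      exact h1
  have hqAB : q (A ×ˢ B) = 1 := by
    have h1 : q Set.univ = 1 := by
      rw [(tala_coupling_mass hq).1]
      exact measure_univ
    have h2 : q Set.univ ≤ q (A ×ˢ B) + q ((A ×ˢ B)ᶜ) := by
      conv_lhs => rw [← Set.union_compl_self (A ×ˢ B)]
      exact measure_union_le _ _
    rw [hcompl, add_zero, h1] at h2
    exact le_antisymm (h1 ▸ measure_mono (Set.subset_univ _)) h2
  calc ENNReal.ofReal r ^ 2 = ENNReal.ofReal r ^ 2 * q (A ×ˢ B) := by rw [hqAB, mul_one]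
    _ = ∫⁻ _ in A ×ˢ B, ENNReal.ofReal r ^ 2 ∂q := (setLIntegral_const _ _).symm
    _ ≤ ∫⁻ p in A ×ˢ B, edist p.1 p.2 ^ 2 ∂q := by
        refine setLIntegral_mono (by fun_prop) fun p hp => ?_
        obtain ⟨hp1, hp2⟩ := hp
        rw [edist_dist]
        exact pow_le_pow_left' (ENNReal.ofReal_le_ofReal (hd _ hp1 _ hp2)) 2
    _ ≤ ∫⁻ p, edist p.1 p.2 ^ 2 ∂q := setLIntegral_le_lintegral _ _

lemma tala_key {m : Measure Y} [IsProbabilityMeasure m] {K : ℝ}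
    {μ₀ μ₁ : Measure Y} (hp₀ : IsProbabilityMeasure μ₀)
    (hcd : CDinftyFor K m μ₀ μ₁) (hW : Wsq μ₀ μ₁ ≠ ⊤)
    {e₀ e₁ : ℝ} (h₀ : Ent μ₀ m = ((e₀ : ℝ) : EReal)) (h₁ : Ent μ₁ m = ((e₁ : ℝ) : EReal))
    {t : ℝ} (ht : t ∈ Icc (0:ℝ) 1) :
    K/2 * (t*(1-t)) * (Wsq μ₀ μ₁).toReal ≤ (1-t)*e₀ + t*e₁ := by
  obtain ⟨ν, hν0, hν1, hgeo, hent⟩ := hcd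
  have h := hent t ht
  rw [h₀, h₁] at h
  set w := (Wsq μ₀ μ₁).toReal with hw
  rw [tala_coe_ennreal _ hW, ← hw, ← EReal.coe_mul, ← EReal.coe_mul, ← EReal.coe_mul,
    ← EReal.coe_add, ← EReal.coe_sub] at h
  have hcond : (ν t) ≪ m ∧ Integrable (fun x => max (entFun (ν t) m x) 0) m := by
    by_contra hc
    rw [Ent, if_neg hc] at h
    exact absurd h (EReal.coe_lt_top _).not_ge
  haveI hpt : IsProbabilityMeasure (ν t) :=
    tala_geodesic_prob hgeo (by rw [hν0]; exact hp₀) (by rw [hν0, hν1]; exact hW) ht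
  have hnn : (0:EReal) ≤ Ent (ν t) m := tala_ent_nonneg _ _ hcond.1 hcond.2
  have h6 := hnn.trans h
  have hr : (0:ℝ) ≤ (1-t)*e₀ + t*e₁ - K/2*(t*(1-t))*w := by exact_mod_cast h6
  linarith
lemma tala_tail [SecondCountableTopology Y] [BorelSpace Y]
    (m : Measure Y) [IsProbabilityMeasure m] {K : ℝ} (hK : 0 < K) (hCD : CDinfty K m)
    {x₀ : Y} (hball : 0 < m (ball x₀ 1)) {R : ℝ} (hR : 1 ≤ R) :
    m {x | R ≤ dist x x₀} ≤
      ENNReal.ofReal (((m (ball x₀ 1)).toReal)⁻¹ * Real.exp (-(K/4) * (R-1)^2)) := by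
  set b := (m (ball x₀ 1)).toReal with hbdef
  have hb : 0 < b := ENNReal.toReal_pos hball.ne' (measure_ne_top _ _)
  have hdistm : Measurable fun x : Y => dist x x₀ := by fun_prop
  have hmeas : ∀ n : ℕ, MeasurableSet {x : Y | R ≤ dist x x₀ ∧ dist x x₀ < (n:ℝ)} := fun n =>
    (measurableSet_le measurable_const hdistm).inter (measurableSet_lt hdistm measurable_const)
  have hunion : {x : Y | R ≤ dist x x₀} = ⋃ n : ℕ, {x | R ≤ dist x x₀ ∧ dist x x₀ < (n:ℝ)} := by
    ext x
    simp only [Set.mem_setOf_eq, Set.mem_iUnion]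
    constructor
    · intro hx
      refine ⟨⌊dist x x₀⌋₊ + 1, hx, ?_⟩
      push_cast
      exact Nat.lt_floor_add_one _
    · rintro ⟨n, h, _⟩
      exact h
  have hmono : Monotone fun n : ℕ => {x : Y | R ≤ dist x x₀ ∧ dist x x₀ < (n:ℝ)} := by
    intro i j hij x hx
    exact ⟨hx.1, lt_of_lt_of_le hx.2 (by exact_mod_cast hij)⟩
  rw [hunion, hmono.directed_le.measure_iUnion]
  refine iSup_le fun n => ?_
  set E := {x : Y | R ≤ dist x x₀ ∧ dist x x₀ < (n:ℝ)} with hEdef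
  rcases eq_zero_or_pos (m E) with hE0 | hEpos
  · rw [hE0]
    exact zero_le
  -- set up the two normalized restricted measures
  set μ₀ := (m (ball x₀ 1))⁻¹ • m.restrict (ball x₀ 1) with hμ₀def
  set μ₁ := (m E)⁻¹ • m.restrict E with hμ₁def
  have hp₀ : IsProbabilityMeasure μ₀ := tala_isProb_restrict m hball
  have hp₁ : IsProbabilityMeasure μ₁ := tala_isProb_restrict m hEpos
  have hm₀ : MemP2 μ₀ :=
    tala_memP2_restrict m measurableSet_ball hball (x₀ := x₀) (R := 1) ball_subset_closedBall
  have hm₁ : MemP2 μ₁ := by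
    refine tala_memP2_restrict m (hmeas n) hEpos (x₀ := x₀) (R := (n:ℝ)) fun x hx => ?_
    exact mem_closedBall.mpr hx.2.le
  have hcd := hCD μ₀ μ₁ hm₀ hm₁
  have hW : Wsq μ₀ μ₁ ≠ ⊤ := (tala_wsq_lt_top hm₀ hm₁).ne
  have hE₀ := tala_ent_restrict m measurableSet_ball hball
  have hE₁ := tala_ent_restrict m (hmeas n) hEpos
  have hkey := tala_key hp₀ hcd hW hE₀ hE₁ (t := 1/2) ⟨by norm_num, by norm_num⟩
  -- lower bound on the transport cost
  have hμ₀c : μ₀ (ball x₀ 1)ᶜ = 0 := by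
    rw [hμ₀def, Measure.smul_apply, Measure.restrict_apply measurableSet_ball.compl,
      Set.compl_inter_self, measure_empty, smul_eq_mul, mul_zero]
  have hμ₁c : μ₁ Eᶜ = 0 := by
    rw [hμ₁def, Measure.smul_apply, Measure.restrict_apply (hmeas n).compl,
      Set.compl_inter_self, measure_empty, smul_eq_mul, mul_zero]
  have hsep : ∀ a ∈ ball x₀ 1, ∀ y ∈ E, R - 1 ≤ dist a y := by
    intro a ha y hy
    have h1 : dist a x₀ < 1 := mem_ball.mp ha
    have h2 : R ≤ dist y x₀ := hy.1
    have h3 := dist_triangle y a x₀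
    have h4 : dist y a = dist a y := dist_comm y a
    linarith
  have hge : ENNReal.ofReal (R - 1) ^ 2 ≤ Wsq μ₀ μ₁ :=
    tala_wsq_ge measurableSet_ball (hmeas n) hμ₀c hμ₁c hsep
  have hwlow : (R-1)^2 ≤ (Wsq μ₀ μ₁).toReal := by
    have h5 := ENNReal.toReal_mono hW hge
    rwa [← ENNReal.ofReal_pow (by linarith), ENNReal.toReal_ofReal (by positivity)] at h5
  -- algebra
  set a := (m E).toReal with hadef
  have ha : 0 < a := ENNReal.toReal_pos hEpos.ne' (measure_ne_top _ _)
  set w := (Wsq μ₀ μ₁).toReal with hwdef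
  have hw0 : 0 ≤ w := ENNReal.toReal_nonneg
  -- hkey : K/2 * (1/2*(1-1/2)) * w ≤ (1-1/2)*(-log b) + 1/2*(-log a)
  have hloga : Real.log a ≤ - Real.log b - (K/4) * (R-1)^2 := by
    have h7 : K/4 * (R-1)^2 ≤ K/4 * w := by
      refine mul_le_mul_of_nonneg_left hwlow (by positivity)
    nlinarith [hkey]
  have haexp : a ≤ b⁻¹ * Real.exp (-(K/4) * (R-1)^2) := by
    have h8 : a = Real.exp (Real.log a) := (Real.exp_log ha).symm
    rw [h8]
    have h9 : Real.exp (Real.log a) ≤ Real.exp (- Real.log b - (K/4) * (R-1)^2) :=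
      Real.exp_le_exp.mpr hloga
    refine h9.trans (le_of_eq ?_)
    rw [sub_eq_add_neg, Real.exp_add, Real.exp_neg, Real.exp_log hb]
    ring_nf
  have hmE : m E = ENNReal.ofReal a := (ENNReal.ofReal_toReal (measure_ne_top m E)).symm
  rw [hmE]
  exact ENNReal.ofReal_le_ofReal haexp
lemma tala_exists_ball_pos [TopologicalSpace.SeparableSpace Y]
    (m : Measure Y) [IsProbabilityMeasure m] :
    ∃ x₀ : Y, 0 < m (ball x₀ 1) := by
  by_contra hc
  push_neg at hc
  obtain ⟨s, hsc, hsd⟩ := TopologicalSpace.exists_countable_dense Y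
  have hcover : (Set.univ : Set Y) ⊆ ⋃ x ∈ s, ball x 1 := by
    intro y _
    obtain ⟨x, hxs, hxd⟩ := Metric.mem_closure_iff.mp (hsd y) 1 one_pos
    exact Set.mem_biUnion hxs (mem_ball.mpr hxd)
  have h0 : m (⋃ x ∈ s, ball x 1) = 0 :=
    (measure_biUnion_null_iff hsc).mpr fun x _ => le_antisymm (hc x) zero_le
  have h1 : m Set.univ = 0 := measure_mono_null hcover h0
  simp [measure_univ] at h1

lemma tala_memP2_of_CD [SecondCountableTopology Y] [BorelSpace Y]
    [TopologicalSpace.SeparableSpace Y]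
    (m : Measure Y) [IsProbabilityMeasure m] {K : ℝ} (hK : 0 < K) (hCD : CDinfty K m) :
    MemP2 m := by
  obtain ⟨x₀, hball⟩ := tala_exists_ball_pos m
  refine ⟨inferInstance, x₀, ?_⟩
  set b := (m (ball x₀ 1)).toReal with hbdef
  have hb : 0 < b := ENNReal.toReal_pos hball.ne' (measure_ne_top _ _)
  set c : ℝ := b⁻¹ + Real.exp (K/4) with hcdef
  have hcpos : 0 < c := by positivity
  have htail : ∀ n : ℕ, m {x | (n:ℝ) ≤ dist x x₀} ≤
      ENNReal.ofReal (c * Real.exp (-(K/4) * ((n:ℝ)-1)^2)) := by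
    intro n
    rcases Nat.eq_zero_or_pos n with h0 | h1
    · subst h0
      have h2 : (1:ℝ) ≤ c * Real.exp (-(K/4) * (((0:ℕ):ℝ)-1)^2) := by
        push_cast
        have h3 : -(K/4) * ((0:ℝ)-1)^2 = -(K/4) := by ring
        rw [h3]
        have h4 : Real.exp (K/4) * Real.exp (-(K/4)) = 1 := by
          rw [← Real.exp_add]; norm_num
        have h5 : 0 < Real.exp (-(K/4)) := Real.exp_pos _
        have h6 : 0 < b⁻¹ := by positivity
        nlinarith
      calc m {x | ((0:ℕ):ℝ) ≤ dist x x₀} ≤ 1 := prob_le_one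
        _ ≤ ENNReal.ofReal (c * Real.exp (-(K/4) * (((0:ℕ):ℝ)-1)^2)) := by
            rw [← ENNReal.ofReal_one]
            exact ENNReal.ofReal_le_ofReal h2
    · have h2 := tala_tail m hK hCD hball (R := (n:ℝ)) (by exact_mod_cast h1)
      refine h2.trans (ENNReal.ofReal_le_ofReal ?_)
      have h3 : 0 < Real.exp (-(K/4) * ((n:ℝ)-1)^2) := Real.exp_pos _
      have h4 : b⁻¹ ≤ c := by
        rw [hcdef]
        nlinarith [Real.exp_pos (K/4)]
      nlinarith
  set Ann : ℕ → Set Y := fun n => {x | (n:ℝ) ≤ dist x x₀ ∧ dist x x₀ < (n:ℝ)+1} with hAnn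
  have hdistm : Measurable fun x : Y => dist x x₀ := by fun_prop
  have hAnnMeas : ∀ n, MeasurableSet (Ann n) := fun n =>
    (measurableSet_le measurable_const hdistm).inter (measurableSet_lt hdistm measurable_const)
  have hdisj : Pairwise (Function.onFun Disjoint Ann) := by
    intro i j hij
    refine Set.disjoint_left.mpr fun x hxi hxj => hij ?_
    have h1 : ⌊dist x x₀⌋₊ = i := (Nat.floor_eq_iff dist_nonneg).mpr ⟨hxi.1, hxi.2⟩
    have h2 : ⌊dist x x₀⌋₊ = j := (Nat.floor_eq_iff dist_nonneg).mpr ⟨hxj.1, hxj.2⟩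
    rw [← h1, h2]
  have hcover : (⋃ n, Ann n) = Set.univ := by
    refine Set.eq_univ_of_forall fun x => Set.mem_iUnion.mpr ?_
    exact ⟨⌊dist x x₀⌋₊, Nat.floor_le dist_nonneg, Nat.lt_floor_add_one _⟩
  have hsplit : ∫⁻ x, edist x x₀ ^ 2 ∂m = ∑' n, ∫⁻ x in Ann n, edist x x₀ ^ 2 ∂m := by
    rw [← setLIntegral_univ, ← hcover, lintegral_iUnion hAnnMeas hdisj]
  rw [hsplit]
  have hbound : ∀ n : ℕ, ∫⁻ x in Ann n, edist x x₀ ^ 2 ∂m ≤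
      ENNReal.ofReal (((n:ℝ)+1)^2) * m {x | (n:ℝ) ≤ dist x x₀} := by
    intro n
    calc ∫⁻ x in Ann n, edist x x₀ ^ 2 ∂m
        ≤ ∫⁻ _ in Ann n, ENNReal.ofReal (((n:ℝ)+1)^2) ∂m := by
          refine setLIntegral_mono measurable_const fun x hx => ?_
          rw [edist_dist, ← ENNReal.ofReal_pow dist_nonneg]
          refine ENNReal.ofReal_le_ofReal ?_
          have h1 := hx.2
          have h2 : (0:ℝ) ≤ dist x x₀ := dist_nonneg
          nlinarith
      _ = ENNReal.ofReal (((n:ℝ)+1)^2) * m (Ann n) := setLIntegral_const _ _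
      _ ≤ ENNReal.ofReal (((n:ℝ)+1)^2) * m {x | (n:ℝ) ≤ dist x x₀} :=
          mul_le_mul_right (measure_mono fun x hx => hx.1) _
  set h : ℕ → ℝ := fun n => ((n:ℝ)+1)^2 * (c * Real.exp (-(K/4) * ((n:ℝ)-1)^2)) with hh
  have hhnn : ∀ n, 0 ≤ h n := fun n => by rw [hh]; positivity
  set r : ℝ := Real.exp (-(K/4)) with hrdef
  have hr0 : 0 < r := Real.exp_pos _
  have hr1 : r < 1 := by
    rw [hrdef, ← Real.exp_zero]
    exact Real.exp_lt_exp.mpr (by linarith)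
  have hnorm : ‖r‖ < 1 := by rw [Real.norm_eq_abs, abs_of_pos hr0]; exact hr1
  have hG : Summable (fun n : ℕ => (n:ℝ)^2 * r^n + 2*((n:ℝ)^1 * r^n) + r^n) :=
    ((summable_pow_mul_geometric_of_norm_lt_one 2 hnorm).add
      ((summable_pow_mul_geometric_of_norm_lt_one 1 hnorm).mul_left 2)).add
      (summable_geometric_of_lt_one hr0.le hr1)
  have hsum : Summable h := by
    refine Summable.of_nonneg_of_le hhnn (fun n => ?_) (hG.mul_left (c * Real.exp (K/4)))
    have hE : Real.exp (-(K/4) * ((n:ℝ)-1)^2) ≤ Real.exp (K/4) * r ^ n := by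
      rw [hrdef, ← Real.exp_nat_mul, ← Real.exp_add]
      refine Real.exp_le_exp.mpr ?_
      have hsq : (n:ℝ) - 1 ≤ ((n:ℝ)-1)^2 := by
        rcases n with _ | k
        · norm_num
        · push_cast
          have h9 : (k:ℝ) ≤ (k:ℝ)^2 := by
            exact_mod_cast Nat.le_self_pow (by norm_num : (2:ℕ) ≠ 0) k
          nlinarith
      nlinarith [mul_le_mul_of_nonneg_left hsq (by positivity : (0:ℝ) ≤ K/4)]
    calc h n = ((n:ℝ)+1)^2 * c * Real.exp (-(K/4)*((n:ℝ)-1)^2) := by rw [hh]; ring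
      _ ≤ ((n:ℝ)+1)^2 * c * (Real.exp (K/4) * r^n) :=
          mul_le_mul_of_nonneg_left hE (by positivity)
      _ = (c * Real.exp (K/4)) * (((n:ℝ)+1)^2 * r^n) := by ring
      _ ≤ (c * Real.exp (K/4)) * ((n:ℝ)^2*r^n + 2*((n:ℝ)^1*r^n) + r^n) := by
          refine mul_le_mul_of_nonneg_left (le_of_eq (by ring)) (by positivity)
  calc ∑' n, ∫⁻ x in Ann n, edist x x₀ ^ 2 ∂m
      ≤ ∑' n, ENNReal.ofReal (h n) := by
        refine ENNReal.tsum_le_tsum fun n => ?_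
        refine (hbound n).trans ?_
        refine le_trans (mul_le_mul_right (htail n) _) (le_of_eq ?_)
        rw [← ENNReal.ofReal_mul (by positivity), hh]
    _ = ENNReal.ofReal (∑' n, h n) := (ENNReal.ofReal_tsum_of_nonneg hhnn hsum).symm
    _ < ⊤ := ENNReal.ofReal_lt_top

end TalagrandAux

/-- **Talagrand inequality** under CD(K,∞), `K > 0`: `W₂(μ,m)² ≤ (2/K)·Ent(μ|m)`. -/
theorem talagrand_inequality
    {X : Type*} [MetricSpace X] [CompleteSpace X] [TopologicalSpace.SeparableSpace X]
    [MeasurableSpace X] [BorelSpace X] (m : Measure X) [IsProbabilityMeasure m]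
    (K : ℝ) (hK : 0 < K) (hCD : CDinfty K m) :
    MemP2 m ∧
    ∀ μ : Measure X, MemP2 μ →
      ((Wsq μ m : ℝ≥0∞) : EReal) ≤ ((2 / K : ℝ) : EReal) * Ent μ m := by
  haveI : SecondCountableTopology X := UniformSpace.secondCountable_of_separable X
  have hm2 : MemP2 m := tala_memP2_of_CD m hK hCD
  refine ⟨hm2, fun μ hμ => ?_⟩
  haveI hpμ : IsProbabilityMeasure μ := hμ.1
  have h2K : (0:ℝ) < 2/K := div_pos two_pos hK
  by_cases htop : Ent μ m = ⊤
  · rw [htop, EReal.coe_mul_top_of_pos h2K]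
    exact le_top
  have hbot : Ent μ m ≠ ⊥ := tala_ent_ne_bot μ m
  have hent : Ent μ m = (((Ent μ m).toReal : ℝ) : EReal) := (EReal.coe_toReal htop hbot).symm
  set e₀ : ℝ := (Ent μ m).toReal with he₀
  have hcd := hCD μ m hμ hm2
  have hW : Wsq μ m ≠ ⊤ := (tala_wsq_lt_top hμ hm2).ne
  have hw0 : (0:ℝ) ≤ (Wsq μ m).toReal := ENNReal.toReal_nonneg
  have hE1 : Ent m m = (((0:ℝ) : ℝ) : EReal) := by rw [tala_ent_self m]; norm_num
  have hstep : ∀ t : ℝ, t ∈ Icc (0:ℝ) 1 → t < 1 →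
      K/2 * t * (Wsq μ m).toReal ≤ e₀ := by
    intro t ht htlt
    have hkey := tala_key hpμ hcd hW hent hE1 ht
    have h1t : (0:ℝ) < 1 - t := by linarith
    have h2 : (K/2 * t * (Wsq μ m).toReal) * (1-t) ≤ e₀ * (1-t) := by
      have hrw : (K/2 * t * (Wsq μ m).toReal) * (1-t)
          = K/2 * (t*(1-t)) * (Wsq μ m).toReal := by ring
      have hrw2 : e₀ * (1-t) = (1-t)*e₀ + t*0 := by ring
      rw [hrw, hrw2]
      exact hkey
    exact le_of_mul_le_mul_right h2 h1t
  have hlim : K/2 * (Wsq μ m).toReal ≤ e₀ := by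
    have htend : Tendsto (fun n : ℕ => K/2 * (1 - 1/((n:ℝ)+1)) * (Wsq μ m).toReal)
        atTop (𝓝 (K/2 * (1 - 0) * (Wsq μ m).toReal)) :=
      ((tendsto_const_nhds.sub tendsto_one_div_add_atTop_nhds_zero_nat).const_mul
        (K/2)).mul_const _
    have hle : ∀ n : ℕ, K/2 * (1 - 1/((n:ℝ)+1)) * (Wsq μ m).toReal ≤ e₀ := by
      intro n
      have hn1 : (0:ℝ) < (n:ℝ)+1 := by positivity
      have hpos : (0:ℝ) < 1/((n:ℝ)+1) := by positivity
      have hle1 : 1/((n:ℝ)+1) ≤ 1 := by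
        rw [div_le_one hn1]
        linarith [Nat.cast_nonneg (α := ℝ) n]
      refine hstep _ ⟨by linarith, by linarith⟩ (by linarith)
    have := le_of_tendsto htend (Filter.Eventually.of_forall hle)
    simpa using this
  have hfinal : (Wsq μ m).toReal ≤ 2/K * e₀ := by
    have h5 := mul_le_mul_of_nonneg_left hlim h2K.le
    have h6 : 2/K * (K/2 * (Wsq μ m).toReal) = (Wsq μ m).toReal := by
      field_simp
    linarith
  rw [tala_coe_ennreal _ hW, hent, ← EReal.coe_mul]
  exact_mod_cast hfinal

end
end
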